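/- arXiv:math/0505463 — 5 statements merged into one kernel-verified Lean document; each statement's English description precedes it below -/
import Mathlib

section
/- Let 1 ≤ k ≤ n and let λ ∈ Γ_k with its entries arranged in decreasing order λ_1 ≥ λ_2 ≥ ⋯ ≥ λ_n. Then λ_k ≥ 0. -/
open Finset

/-- The `k`-th elementary symmetric polynomial of `x ∈ ℝⁿ`. -/
noncomputable def esymmR (n k : ℕ) (x : Fin n → ℝ) : ℝ :=
  ∑ s ∈ Finset.univ.powersetCard k, ∏ i ∈ s, x i

/-- The Gårding cone `Γ_k ⊆ ℝⁿ`. -/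
def GardingCone (n k : ℕ) : Set (Fin n → ℝ) :=
  {x | ∀ j : ℕ, 1 ≤ j → j ≤ k → 0 < esymmR n j x}

/-- Truncated elementary symmetric function: `j`-th esymm of the first `m` entries. -/
noncomputable def Etr (n : ℕ) (x : Fin n → ℝ) (m j : ℕ) : ℝ :=
  ∑ s ∈ (Finset.univ.filter (fun i : Fin n => (i : ℕ) < m)).powersetCard j, ∏ i ∈ s, x i

lemma Etr_zero (n : ℕ) (x : Fin n → ℝ) (m : ℕ) : Etr n x m 0 = 1 := by
  simp [Etr]

lemma Etr_top (n : ℕ) (x : Fin n → ℝ) (j : ℕ) : Etr n x n j = esymmR n j x := by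
  have h : (Finset.univ.filter (fun i : Fin n => (i : ℕ) < n)) = Finset.univ := by
    ext i; simp [i.2]
  simp [Etr, h, esymmR]

lemma filter_succ_eq_insert (n m : ℕ) (hm : m < n) :
    (Finset.univ.filter (fun i : Fin n => (i : ℕ) < m + 1)) =
      insert ⟨m, hm⟩ (Finset.univ.filter (fun i : Fin n => (i : ℕ) < m)) := by
  ext i
  simp only [mem_filter, mem_univ, true_and, mem_insert, Fin.ext_iff]
  omega

lemma Etr_rec (n : ℕ) (x : Fin n → ℝ) (m j : ℕ) (hm : m < n) :
    Etr n x (m + 1) (j + 1) = Etr n x m (j + 1) + x ⟨m, hm⟩ * Etr n x m j := by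
  set u : Finset (Fin n) := Finset.univ.filter (fun i : Fin n => (i : ℕ) < m) with hu
  have hmem : (⟨m, hm⟩ : Fin n) ∉ u := by simp [hu]
  have hins := filter_succ_eq_insert n m hm
  have hdisj : Disjoint (u.powersetCard (j + 1))
      ((u.powersetCard j).image (insert (⟨m, hm⟩ : Fin n))) := by
    rw [Finset.disjoint_left]
    rintro s hs hs'
    rw [Finset.mem_image] at hs'
    obtain ⟨t, ht, rfl⟩ := hs'
    exact hmem ((Finset.mem_powersetCard.1 hs).1 (Finset.mem_insert_self _ t))
  have hinj : ∀ s ∈ u.powersetCard j, ∀ t ∈ u.powersetCard j,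
      insert (⟨m, hm⟩ : Fin n) s = insert ⟨m, hm⟩ t → s = t := by
    intro s hs t ht h
    have hs' : (⟨m, hm⟩ : Fin n) ∉ s :=
      fun hc => hmem ((Finset.mem_powersetCard.1 hs).1 hc)
    have ht' : (⟨m, hm⟩ : Fin n) ∉ t :=
      fun hc => hmem ((Finset.mem_powersetCard.1 ht).1 hc)
    rw [← Finset.erase_insert hs', ← Finset.erase_insert ht', h]
  calc Etr n x (m + 1) (j + 1)
      = ∑ s ∈ (insert (⟨m, hm⟩ : Fin n) u).powersetCard (j + 1), ∏ i ∈ s, x i := by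
        rw [Etr, hins]
    _ = ∑ s ∈ u.powersetCard (j + 1), ∏ i ∈ s, x i
        + ∑ s ∈ (u.powersetCard j).image (insert (⟨m, hm⟩ : Fin n)), ∏ i ∈ s, x i := by
        rw [Finset.powersetCard_succ_insert hmem, Finset.sum_union hdisj]
    _ = Etr n x m (j + 1) + x ⟨m, hm⟩ * Etr n x m j := by
        rw [Finset.sum_image hinj]
        congr 1
        rw [Etr, Finset.mul_sum]
        refine Finset.sum_congr rfl fun s hs => ?_
        have hs' : (⟨m, hm⟩ : Fin n) ∉ s :=
          fun hc => hmem ((Finset.mem_powersetCard.1 hs).1 hc)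
        rw [Finset.prod_insert hs']

lemma card_filter_lt (n m : ℕ) (hm : m ≤ n) :
    (Finset.univ.filter (fun i : Fin n => (i : ℕ) < m)).card = m := by
  have h : (Finset.univ.filter (fun i : Fin n => (i : ℕ) < m)) =
      (Finset.univ : Finset (Fin m)).map
        ⟨fun i => ⟨(i : ℕ), lt_of_lt_of_le i.2 hm⟩,
          fun a b h => by simpa [Fin.ext_iff] using h⟩ := by
    ext i
    constructor
    · intro hi
      rw [Finset.mem_filter] at hi
      exact Finset.mem_map.2 ⟨⟨(i : ℕ), hi.2⟩, Finset.mem_univ _, Fin.ext rfl⟩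
    · intro hi
      obtain ⟨j, -, rfl⟩ := Finset.mem_map.1 hi
      exact Finset.mem_filter.2 ⟨Finset.mem_univ _, j.2⟩
  rw [h, Finset.card_map, Finset.card_univ, Fintype.card_fin]

/-- If `λ ∈ Γ_k` has decreasingly arranged entries `λ_1 ≥ ⋯ ≥ λ_n`, then `λ_k ≥ 0`. -/
theorem gardingCone_kth_entry_nonneg (n k : ℕ) (hk : 1 ≤ k) (hkn : k ≤ n)
    (x : Fin n → ℝ) (hx : x ∈ GardingCone n k)
    (hdec : ∀ i j : Fin n, i ≤ j → x j ≤ x i) :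
    0 ≤ x ⟨k - 1, by omega⟩ := by
  by_contra hneg
  push_neg at hneg
  set κ : Fin n := ⟨k - 1, by omega⟩ with hκ
  have hxneg : ∀ i : Fin n, k - 1 ≤ (i : ℕ) → x i < 0 := fun i hi =>
    lt_of_le_of_lt (hdec κ i hi) hneg
  -- downward induction: all truncations stay positive
  have hpos : ∀ d, d ≤ n - k → ∀ j, j ≤ k → 0 < Etr n x (n - d) j := by
    intro d
    induction d with
    | zero =>
      intro _ j hj
      rcases Nat.eq_zero_or_pos j with rfl | hj1
      · rw [Etr_zero]; norm_num
      · rw [Nat.sub_zero, Etr_top]; exact hx j hj1 hj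
    | succ d ih =>
      intro hd
      have hd' : d ≤ n - k := by omega
      have hmn : n - (d + 1) < n := by omega
      have hms : n - (d + 1) + 1 = n - d := by omega
      have hxm : x ⟨n - (d + 1), hmn⟩ < 0 := hxneg ⟨n - (d + 1), hmn⟩ (by show k - 1 ≤ n - (d + 1); omega)
      intro j
      induction j with
      | zero => intro _; rw [Etr_zero]; norm_num
      | succ j ihj =>
        intro hj
        have h1 : 0 < Etr n x (n - (d + 1) + 1) (j + 1) := by
          rw [hms]; exact ih hd' (j + 1) hj
        have h2 : 0 < Etr n x (n - (d + 1)) j := ihj (by omega)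
        have hr := Etr_rec n x (n - (d + 1)) j hmn
        nlinarith [mul_pos (neg_pos.2 hxm) h2]
  have hposk : ∀ j, j ≤ k → 0 < Etr n x k j := by
    have h := hpos (n - k) le_rfl
    rwa [Nat.sub_sub_self hkn] at h
  -- set of the first k indices
  set u : Finset (Fin n) := Finset.univ.filter (fun i : Fin n => (i : ℕ) < k) with hu
  have hcard : u.card = k := card_filter_lt n k hkn
  set t : ℝ := -x κ with ht
  have htpos : 0 < t := by rw [ht]; linarith
  have hκmem : κ ∈ u := by
    simp only [hu, mem_filter, mem_univ, true_and, hκ]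
    omega
  have hP0 : ∏ i ∈ u, (x i + t) = 0 :=
    Finset.prod_eq_zero hκmem (by rw [ht]; ring)
  have hPpos : 0 < ∏ i ∈ u, (x i + t) := by
    rw [Finset.prod_add, Finset.powerset_card_disjiUnion]
    erw [Finset.sum_disjiUnion]
    apply Finset.sum_pos
    · intro j hj
      rw [Finset.mem_range, hcard] at hj
      have hjk : j ≤ k := by omega
      have hsum : ∑ s ∈ u.powersetCard j, ((∏ i ∈ s, x i) * ∏ _i ∈ u \ s, t)
          = t ^ (k - j) * Etr n x k j := by
        rw [Etr, ← hu, Finset.mul_sum]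
        refine Finset.sum_congr rfl fun s hs => ?_
        have hs' := Finset.mem_powersetCard.1 hs
        rw [Finset.prod_const, Finset.card_sdiff_of_subset hs'.1, hcard, hs'.2, mul_comm]
      rw [hsum]
      exact mul_pos (pow_pos htpos _) (hposk j hjk)
    · exact ⟨0, by simp⟩
  exact hPpos.ne' hP0
end

section
/- Let 1 ≤ k ≤ n and let λ ∈ Γ_k with its entries arranged in decreasing order λ_1 ≥ λ_2 ≥ ⋯ ≥ λ_n. Then 0 < σ_{k−1;1}(λ) ≤ σ_{k−1;2}(λ) ≤ ⋯ ≤ σ_{k−1;n}(λ); in particular σ_{k−1;i}(λ) > 0 for every i. -/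
open Finset

open Polynomial

lemma esymmR_zero (n : ℕ) (x : Fin n → ℝ) : esymmR n 0 x = 1 := by
  simp [esymmR]

-- update-vanishing form: sum over subsets not containing i
lemma esymmR_update_eq (n m : ℕ) (x : Fin n → ℝ) (i : Fin n) :
    esymmR n m (Function.update x i 0)
      = ∑ s ∈ (univ.powersetCard m).filter (fun s => i ∉ s), ∏ j ∈ s, x j := by
  rw [esymmR, ← Finset.sum_filter_add_sum_filter_not (univ.powersetCard m) (fun s => i ∉ s)]
  have h1 : ∀ s ∈ (univ.powersetCard m).filter (fun s => i ∉ s),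
      (∏ j ∈ s, Function.update x i 0 j) = ∏ j ∈ s, x j := by
    intro s hs
    rcases Finset.mem_filter.mp hs with ⟨-, his⟩
    exact Finset.prod_congr rfl fun j hj => Function.update_of_ne (by rintro rfl; exact his hj) _ _
  have h2 : ∀ s ∈ (univ.powersetCard m).filter (fun s => ¬ i ∉ s),
      (∏ j ∈ s, Function.update x i 0 j) = 0 := by
    intro s hs
    rcases Finset.mem_filter.mp hs with ⟨-, his⟩
    exact Finset.prod_eq_zero (not_not.mp his) (Function.update_self i 0 x)
  rw [Finset.sum_congr rfl h1, Finset.sum_congr rfl h2]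
  simp

lemma esymmR_succ_update (n m : ℕ) (x : Fin n → ℝ) (i : Fin n) :
    esymmR n (m + 1) x
      = esymmR n (m + 1) (Function.update x i 0)
        + x i * esymmR n m (Function.update x i 0) := by
  rw [esymmR, ← Finset.sum_filter_add_sum_filter_not (univ.powersetCard (m+1)) (fun s => i ∉ s),
    esymmR_update_eq, esymmR_update_eq, Finset.mul_sum]
  congr 1
  refine Finset.sum_nbij' (fun s => s.erase i) (fun s => insert i s) ?_ ?_ ?_ ?_ ?_
  · intro s hs
    rcases Finset.mem_filter.mp hs with ⟨hs1, his⟩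
    rcases Finset.mem_powersetCard.mp hs1 with ⟨-, hc⟩
    refine Finset.mem_filter.mpr ⟨Finset.mem_powersetCard.mpr ⟨Finset.subset_univ _, ?_⟩,
      Finset.notMem_erase _ _⟩
    rw [Finset.card_erase_of_mem (not_not.mp his), hc]; rfl
  · intro s hs
    rcases Finset.mem_filter.mp hs with ⟨hs1, his⟩
    rcases Finset.mem_powersetCard.mp hs1 with ⟨-, hc⟩
    refine Finset.mem_filter.mpr ⟨Finset.mem_powersetCard.mpr ⟨Finset.subset_univ _, ?_⟩, ?_⟩
    · rw [Finset.card_insert_of_notMem his, hc]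
    · simp [Finset.mem_insert]
  · intro s hs
    rcases Finset.mem_filter.mp hs with ⟨-, his⟩
    exact Finset.insert_erase (not_not.mp his)
  · intro s hs
    rcases Finset.mem_filter.mp hs with ⟨-, his⟩
    exact Finset.erase_insert his
  · intro s hs
    rcases Finset.mem_filter.mp hs with ⟨-, his⟩
    rw [← Finset.mul_prod_erase s x (not_not.mp his)]

lemma esymmR_smul (n m : ℕ) (a : ℝ) (x : Fin n → ℝ) :
    esymmR n m (fun i => a * x i) = a ^ m * esymmR n m x := by
  rw [esymmR, esymmR, Finset.mul_sum]
  refine Finset.sum_congr rfl fun s hs => ?_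
  rcases Finset.mem_powersetCard.mp hs with ⟨-, hc⟩
  rw [Finset.prod_mul_distrib, Finset.prod_const, hc]

-- number of j-subsets of univ containing a fixed t
lemma card_supersets (n j : ℕ) (t : Finset (Fin n)) (hj : j ≤ n) (hcard : t.card ≤ j) :
    ((univ.powersetCard j).filter (fun s => t ⊆ s)).card
      = (n - t.card).choose (j - t.card) := by
  have : ((univ.powersetCard j).filter (fun s => t ⊆ s)).card
      = ((univ \ t).powersetCard (j - t.card)).card := by
    refine Finset.card_nbij' (fun s => s \ t) (fun u => t ∪ u) ?_ ?_ ?_ ?_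
    · intro s hs
      rcases Finset.mem_filter.mp hs with ⟨hs1, hts⟩
      rcases Finset.mem_powersetCard.mp hs1 with ⟨-, hc⟩
      exact Finset.mem_powersetCard.mpr ⟨Finset.sdiff_subset_sdiff (Finset.subset_univ _)
        (le_refl _), by rw [Finset.card_sdiff_of_subset hts, hc]⟩
    · intro u hu
      rcases Finset.mem_powersetCard.mp hu with ⟨hsub, hc⟩
      have hdisj : Disjoint t u := by
        refine Finset.disjoint_left.mpr fun a ha hau => ?_
        exact (Finset.mem_sdiff.mp (hsub hau)).2 ha
      refine Finset.mem_filter.mpr ⟨Finset.mem_powersetCard.mpr ⟨Finset.subset_univ _, ?_⟩,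
        Finset.subset_union_left⟩
      rw [Finset.card_union_of_disjoint hdisj, hc]
      omega
    · intro s hs
      rcases Finset.mem_filter.mp hs with ⟨-, hts⟩
      exact Finset.union_sdiff_of_subset hts
    · intro u hu
      rcases Finset.mem_powersetCard.mp hu with ⟨hsub, -⟩
      refine Finset.union_sdiff_cancel_left ?_
      refine Finset.disjoint_left.mpr fun a ha hau => ?_
      exact (Finset.mem_sdiff.mp (hsub hau)).2 ha
  rw [this, Finset.card_powersetCard, Finset.card_sdiff_of_subset (Finset.subset_univ t),
    Finset.card_univ, Fintype.card_fin]

lemma esymmR_add_const (n j : ℕ) (hj : j ≤ n) (c : ℝ) (x : Fin n → ℝ) :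
    esymmR n j (fun i => x i + c)
      = ∑ m ∈ Finset.range (j + 1),
          ((n - m).choose (j - m) : ℝ) * c ^ (j - m) * esymmR n m x := by
  have step1 : esymmR n j (fun i => x i + c)
      = ∑ s ∈ univ.powersetCard j, ∑ t ∈ (univ : Finset (Fin n)).powerset,
          (if t ⊆ s then (∏ i ∈ t, x i) * c ^ (j - t.card) else 0) := by
    rw [esymmR]
    refine Finset.sum_congr rfl fun s hs => ?_
    rcases Finset.mem_powersetCard.mp hs with ⟨hsub, hc⟩
    rw [Finset.prod_add, ← Finset.sum_filter]
    have hfil : (univ : Finset (Fin n)).powerset.filter (fun t => t ⊆ s) = s.powerset := by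
      ext t; simp [Finset.mem_powerset]
    rw [hfil]
    refine Finset.sum_congr rfl fun t ht => ?_
    rw [Finset.mem_powerset] at ht
    rw [Finset.prod_const, Finset.card_sdiff_of_subset ht, hc]
  rw [step1, Finset.sum_comm]
  have step2 : ∀ t ∈ (univ : Finset (Fin n)).powerset,
      (∑ s ∈ univ.powersetCard j, if t ⊆ s then (∏ i ∈ t, x i) * c ^ (j - t.card) else 0)
        = (((univ.powersetCard j).filter (fun s => t ⊆ s)).card : ℝ)
            * ((∏ i ∈ t, x i) * c ^ (j - t.card)) := by
    intro t _
    rw [← Finset.sum_filter, Finset.sum_const, nsmul_eq_mul]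
  rw [Finset.sum_congr rfl step2]
  -- now group by cardinality
  rw [Finset.powerset_card_disjiUnion]; erw [Finset.sum_disjiUnion]
  rw [Finset.card_univ, Fintype.card_fin]
  have hsplit : Finset.range (n + 1)
      = Finset.range (j+1) ∪ (Finset.range (n+1)).filter (fun m => j + 1 ≤ m) := by
    ext m; simp [Finset.mem_range, Finset.mem_filter]; omega
  rw [hsplit, Finset.sum_union]
  · have hzero : ∀ m ∈ (Finset.range (n+1)).filter (fun m => j + 1 ≤ m),
        (∑ t ∈ univ.powersetCard m,
          (((univ.powersetCard j).filter (fun s => t ⊆ s)).card : ℝ)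
            * ((∏ i ∈ t, x i) * c ^ (j - t.card))) = 0 := by
      intro m hm
      rcases Finset.mem_filter.mp hm with ⟨-, hjm⟩
      refine Finset.sum_eq_zero fun t ht => ?_
      rcases Finset.mem_powersetCard.mp ht with ⟨-, hc⟩
      have : (univ.powersetCard j).filter (fun s => t ⊆ s) = ∅ := by
        refine Finset.filter_false_of_mem fun s hs hts => ?_
        rcases Finset.mem_powersetCard.mp hs with ⟨-, hcs⟩
        have := Finset.card_le_card hts
        omega
      rw [this]; simp
    rw [Finset.sum_congr rfl hzero, Finset.sum_const, smul_zero, add_zero]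
    refine Finset.sum_congr rfl fun m hm => ?_
    rw [Finset.mem_range] at hm
    rw [esymmR, Finset.mul_sum]
    refine Finset.sum_congr rfl fun t ht => ?_
    rcases Finset.mem_powersetCard.mp ht with ⟨-, hc⟩
    rw [card_supersets n j t hj (by omega), hc]
    ring
  · refine Finset.disjoint_left.mpr fun m hm hm' => ?_
    rw [Finset.mem_range] at hm
    rcases Finset.mem_filter.mp hm' with ⟨-, h2⟩
    omega

-- (c) generic: 2 * Σ_{|s|=2} ∏_s w = (Σ w)^2 - Σ w^2, over any finset
lemma two_mul_esymm_two (ι : Type*) [DecidableEq ι] (u : Finset ι) (w : ι → ℝ) :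
    2 * ∑ s ∈ u.powersetCard 2, ∏ i ∈ s, w i
      = (∑ i ∈ u, w i) ^ 2 - ∑ i ∈ u, (w i) ^ 2 := by
  induction u using Finset.induction_on with
  | empty =>
    rw [show (∅ : Finset ι).powersetCard 2 = ∅ from Finset.powersetCard_eq_empty.mpr (by simp)]
    simp
  | @insert a u ha ih =>
    rw [Finset.powersetCard_succ_insert ha, Finset.sum_union, Finset.sum_image, Finset.sum_insert ha,
      Finset.sum_insert ha]
    · have h1 : ∀ t ∈ u.powersetCard 1, (∏ i ∈ insert a t, w i) = w a * ∏ i ∈ t, w i := by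
        intro t ht
        rcases Finset.mem_powersetCard.mp ht with ⟨hsub, -⟩
        exact Finset.prod_insert (fun hat => ha (hsub hat))
      rw [Finset.sum_congr rfl h1, ← Finset.mul_sum]
      have h2 : ∑ t ∈ u.powersetCard 1, ∏ i ∈ t, w i = ∑ i ∈ u, w i := by
        rw [Finset.powersetCard_one, Finset.sum_map]
        simp
      rw [h2, mul_add, ih]
      ring
    · intro s hs t ht hst
      rcases Finset.mem_powersetCard.mp hs with ⟨hsu, -⟩
      rcases Finset.mem_powersetCard.mp ht with ⟨htu, -⟩
      have : s = (insert a s).erase a := by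
        rw [Finset.erase_insert (fun has => ha (hsu has))]
      rw [this, hst, Finset.erase_insert (fun hat => ha (htu hat))]
    · refine Finset.disjoint_left.mpr fun s hs hs' => ?_
      rcases Finset.mem_powersetCard.mp hs with ⟨hsu, -⟩
      rcases Finset.mem_image.mp hs' with ⟨t, ht, rfl⟩
      exact ha (hsu (Finset.mem_insert_self a t))

-- complement bijection for sums over powersetCard of univ
lemma sum_powersetCard_compl (ι : Type*) [Fintype ι] [DecidableEq ι] (m : ℕ)
    (hm : m ≤ Fintype.card ι) (f : Finset ι → ℝ) :
    ∑ s ∈ (univ : Finset ι).powersetCard m, f s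
      = ∑ s ∈ (univ : Finset ι).powersetCard (Fintype.card ι - m), f sᶜ := by
  refine Finset.sum_nbij' (fun s => sᶜ) (fun s => sᶜ) ?_ ?_ ?_ ?_ ?_
  · intro s hs
    rcases Finset.mem_powersetCard.mp hs with ⟨-, hc⟩
    exact Finset.mem_powersetCard.mpr ⟨Finset.subset_univ _, by rw [Finset.card_compl, hc]⟩
  · intro s hs
    rcases Finset.mem_powersetCard.mp hs with ⟨-, hc⟩
    refine Finset.mem_powersetCard.mpr ⟨Finset.subset_univ _, ?_⟩
    rw [Finset.card_compl, hc]
    omega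
  · intro s _; exact compl_compl s
  · intro s _; exact compl_compl s
  · intro s _; rw [compl_compl]

lemma key_ineq (ι : Type*) [Fintype ι] [DecidableEq ι] (hk : 2 ≤ Fintype.card ι) (z : ι → ℝ)
    (h : ∑ s ∈ (univ : Finset ι).powersetCard (Fintype.card ι - 1), ∏ i ∈ s, z i = 0) :
    (∑ s ∈ (univ : Finset ι).powersetCard (Fintype.card ι - 2), ∏ i ∈ s, z i)
      * (∑ s ∈ (univ : Finset ι).powersetCard (Fintype.card ι), ∏ i ∈ s, z i) ≤ 0 := by
  set N := Fintype.card ι with hN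
  set Q : ι → ℝ := fun i => ∏ j ∈ univ.erase i, z j with hQ
  -- (a)
  have ha : ∑ s ∈ (univ : Finset ι).powersetCard (N - 1), ∏ i ∈ s, z i = ∑ i, Q i := by
    rw [sum_powersetCard_compl ι (N - 1) (by omega) (fun s => ∏ i ∈ s, z i)]
    rw [show N - (N - 1) = 1 by omega, Finset.powersetCard_one, Finset.sum_map]
    refine Finset.sum_congr rfl fun i _ => ?_
    have hcs : ({i} : Finset ι)ᶜ = univ.erase i := by
      ext a; simp [Finset.mem_compl, Finset.mem_erase, eq_comm]
    simp only [Function.Embedding.coeFn_mk, hcs, hQ]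
  -- big product over univ
  have huniv : ∑ s ∈ (univ : Finset ι).powersetCard N, ∏ i ∈ s, z i = ∏ i, z i := by
    rw [show (univ : Finset ι).powersetCard N = {univ} by
      rw [hN, ← Finset.card_univ]; exact Finset.powersetCard_self univ]
    simp
  -- (b)
  have hb : (∑ s ∈ (univ : Finset ι).powersetCard (N - 2), ∏ i ∈ s, z i)
      * (∑ s ∈ (univ : Finset ι).powersetCard N, ∏ i ∈ s, z i)
      = ∑ s ∈ (univ : Finset ι).powersetCard 2, ∏ i ∈ s, Q i := by
    rw [huniv, sum_powersetCard_compl ι (N - 2) (by omega) (fun s => ∏ i ∈ s, z i),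
      show N - (N - 2) = 2 by omega, Finset.sum_mul]
    refine Finset.sum_congr rfl fun s hs => ?_
    rcases Finset.mem_powersetCard.mp hs with ⟨-, hc⟩
    rcases Finset.card_eq_two.mp hc with ⟨a, b, hab, rfl⟩
    have hcs : ({a, b} : Finset ι)ᶜ = (univ.erase a).erase b := by
      ext x; simp [Finset.mem_compl, Finset.mem_erase]; tauto
    have hbmem : b ∈ univ.erase a := Finset.mem_erase.mpr ⟨fun hba => hab hba.symm, Finset.mem_univ b⟩
    have hamem : a ∈ univ.erase b := Finset.mem_erase.mpr ⟨hab, Finset.mem_univ a⟩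
    have hW : ∏ j ∈ (univ.erase b).erase a, z j = ∏ j ∈ (univ.erase a).erase b, z j := by
      rw [Finset.erase_right_comm]
    have e1 : ∏ i : ι, z i = z a * (z b * ∏ j ∈ (univ.erase a).erase b, z j) := by
      rw [← Finset.mul_prod_erase univ z (Finset.mem_univ a),
        ← Finset.mul_prod_erase (univ.erase a) z hbmem]
    have e2 : Q a = z b * ∏ j ∈ (univ.erase a).erase b, z j := by
      rw [hQ]; exact (Finset.mul_prod_erase (univ.erase a) z hbmem).symm
    have e3 : Q b = z a * ∏ j ∈ (univ.erase a).erase b, z j := by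
      rw [hQ, ← hW]; exact (Finset.mul_prod_erase (univ.erase b) z hamem).symm
    rw [Finset.prod_pair hab, hcs, e1, e2, e3]
    ring
  rw [hb]
  have hc2 := two_mul_esymm_two ι univ Q
  rw [← ha] at hc2
  rw [h] at hc2
  nlinarith [Finset.sum_nonneg (fun i (_ : i ∈ (univ : Finset ι)) => sq_nonneg (Q i))]

lemma multiset_key (k : ℕ) (hk : 2 ≤ k) (s : Multiset ℝ) (hcard : Multiset.card s = k)
    (h : s.esymm (k - 1) = 0) : s.esymm (k - 2) * s.esymm k ≤ 0 := by
  obtain ⟨l, rfl⟩ : ∃ l : List ℝ, (l : Multiset ℝ) = s := ⟨s.toList, s.coe_toList⟩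
  have hlen : l.length = k := by simpa using hcard
  have hmap : (univ : Finset (Fin l.length)).val.map l.get = (l : Multiset ℝ) := by
    rw [Fin.univ_val_map]
    exact congrArg _ (List.ofFn_get l)
  have hcardι : Fintype.card (Fin l.length) = k := by simp [hlen]
  have hes : ∀ m : ℕ, (l : Multiset ℝ).esymm m
      = ∑ t ∈ (univ : Finset (Fin l.length)).powersetCard m, ∏ i ∈ t, l.get i := by
    intro m
    rw [← hmap, Finset.esymm_map_val]
  rw [hes, hes]
  have := key_ineq (Fin l.length) (by omega) l.get (by rw [hcardι, ← hes, h])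
  rw [hcardι] at this
  exact this

lemma descFactorial_cast_pos (a b : ℕ) (h : b ≤ a) : (0:ℝ) < (a.descFactorial b : ℝ) := by
  have : a.descFactorial b ≠ 0 := by
    rw [Ne, Nat.descFactorial_eq_zero_iff_lt]; omega
  exact_mod_cast Nat.pos_of_ne_zero this

theorem newton_step (n k : ℕ) (hk : 2 ≤ k) (hkn : k ≤ n) (y : Fin n → ℝ)
    (h : esymmR n (k - 1) y = 0) : esymmR n (k - 2) y * esymmR n k y ≤ 0 := by
  classical
  set p : ℝ[X] := ∏ i : Fin n, (X + C (y i)) with hp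
  have hpm : p.Monic := monic_prod_of_monic _ _ fun i _ => monic_X_add_C (y i)
  have hpdeg : p.natDegree = n := by
    rw [hp, natDegree_prod_of_monic _ _ fun i _ => monic_X_add_C (y i)]
    simp [natDegree_X_add_C]
  have hcoeff : ∀ j : ℕ, j ≤ n → p.coeff (n - j) = esymmR n j y := by
    intro j hj
    have hcard : (univ : Finset (Fin n)).card = n := by simp
    have := Finset.prod_X_add_C_coeff (univ : Finset (Fin n)) y
      (k := n - j) (by rw [hcard]; omega)
    rw [hp, this, hcard, esymmR, show n - (n - j) = j by omega]
  -- roots of p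
  have hproots : p.roots = (univ : Finset (Fin n)).val.map (fun i => -(y i)) := by
    have : p = (Multiset.map (fun a => X - C a)
        ((univ : Finset (Fin n)).val.map fun i => -(y i))).prod := by
      rw [Multiset.map_map, hp, Finset.prod_eq_multiset_prod]
      refine congrArg _ (Multiset.map_congr rfl fun i _ => ?_)
      simp [sub_neg_eq_add]
    rw [this, roots_multiset_prod_X_sub_C]
  have hprootscard : Multiset.card p.roots = n := by rw [hproots]; simp
  -- iterated derivative
  set q : ℝ[X] := derivative^[n - k] p with hq
  have hqcoeff : ∀ j : ℕ, j ≤ k →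
      q.coeff (k - j) = ((n - j).descFactorial (n - k) : ℝ) * esymmR n j y := by
    intro j hj
    rw [hq, Polynomial.coeff_iterate_derivative, show k - j + (n - k) = n - j by omega,
      hcoeff j (by omega), nsmul_eq_mul]
  have hc0 : (0:ℝ) < ((n - 0).descFactorial (n - k) : ℝ) :=
    descFactorial_cast_pos _ _ (by omega)
  have hqk : q.coeff k = ((n - 0).descFactorial (n - k) : ℝ) := by
    have := hqcoeff 0 (by omega)
    rw [Nat.sub_zero] at this
    rw [this, esymmR_zero, mul_one]
  have hqne : q.coeff k ≠ 0 := by rw [hqk]; exact ne_of_gt hc0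
  have hqdeg : q.natDegree = k := by
    have hle : q.natDegree ≤ k := by
      have := Polynomial.natDegree_iterate_derivative p (n - k)
      rw [← hq, hpdeg] at this
      omega
    have hge : k ≤ q.natDegree := Polynomial.le_natDegree_of_ne_zero hqne
    omega
  have hqroots : Multiset.card q.roots = q.natDegree := by
    have hub : Multiset.card q.roots ≤ q.natDegree := Polynomial.card_roots' q
    have hiter : ∀ m : ℕ, Multiset.card p.roots ≤ Multiset.card ((derivative^[m]) p).roots + m := by
      intro m
      induction m with
      | zero => simp
      | succ d ih =>
        refine ih.trans ?_
        rw [Function.iterate_succ_apply']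
        have := Polynomial.card_roots_le_derivative (derivative^[d] p)
        omega
    have := hiter (n - k)
    rw [hprootscard, ← hq] at this
    omega
  have hL : q.leadingCoeff = q.coeff k := by rw [Polynomial.leadingCoeff, hqdeg]
  have hLpos : (0:ℝ) < q.leadingCoeff := by rw [hL, hqk]; exact hc0
  -- Vieta for q
  have hvieta : ∀ j : ℕ, j ≤ k →
      ((n - j).descFactorial (n - k) : ℝ) * esymmR n j y
        = q.leadingCoeff * (-1) ^ j * q.roots.esymm j := by
    intro j hj
    have h1 := Polynomial.coeff_eq_esymm_roots_of_card hqroots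
      (k := k - j) (by rw [hqdeg]; omega)
    rw [hqdeg, show k - (k - j) = j by omega] at h1
    rw [← hqcoeff j hj, h1]
  -- E (k-1) = 0
  have hE1 : q.roots.esymm (k - 1) = 0 := by
    have := hvieta (k-1) (by omega)
    rw [h, mul_zero] at this
    have hne : q.leadingCoeff * (-1:ℝ) ^ (k-1) ≠ 0 :=
      mul_ne_zero (ne_of_gt hLpos) (by positivity)
    rcases mul_eq_zero.mp this.symm with h' | h'
    · exact absurd h' hne
    · exact h'
  have hcardq : Multiset.card q.roots = k := by rw [hqroots, hqdeg]
  have hM := multiset_key k hk q.roots hcardq hE1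
  -- final computation
  have e2 := hvieta (k-2) (by omega)
  have e3 := hvieta k (le_refl k)
  have hsign : ((-1:ℝ)) ^ (k-2) * (-1) ^ k = 1 := by
    rw [← pow_add, show k - 2 + k = 2 * (k-1) by omega, pow_mul]
    norm_num
  have hc2 : (0:ℝ) < ((n - (k-2)).descFactorial (n - k) : ℝ) :=
    descFactorial_cast_pos _ _ (by omega)
  have hck : (0:ℝ) < ((n - k).descFactorial (n - k) : ℝ) :=
    descFactorial_cast_pos _ _ (by omega)
  have hprod : (((n - (k-2)).descFactorial (n - k) : ℝ) * ((n - k).descFactorial (n - k) : ℝ))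
      * (esymmR n (k - 2) y * esymmR n k y)
      = (q.leadingCoeff * q.leadingCoeff) * (q.roots.esymm (k-2) * q.roots.esymm k) := by
    have : (((n - (k-2)).descFactorial (n - k) : ℝ) * esymmR n (k-2) y)
        * (((n - k).descFactorial (n - k) : ℝ) * esymmR n k y)
        = (q.leadingCoeff * (-1) ^ (k-2) * q.roots.esymm (k-2))
          * (q.leadingCoeff * (-1) ^ k * q.roots.esymm k) := by rw [e2, e3]
    calc (((n - (k-2)).descFactorial (n - k) : ℝ) * ((n - k).descFactorial (n - k) : ℝ))
        * (esymmR n (k - 2) y * esymmR n k y)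
        = (((n - (k-2)).descFactorial (n - k) : ℝ) * esymmR n (k-2) y)
          * (((n - k).descFactorial (n - k) : ℝ) * esymmR n k y) := by ring
      _ = (q.leadingCoeff * (-1) ^ (k-2) * q.roots.esymm (k-2))
          * (q.leadingCoeff * (-1) ^ k * q.roots.esymm k) := this
      _ = ((-1:ℝ) ^ (k-2) * (-1) ^ k) * ((q.leadingCoeff * q.leadingCoeff)
          * (q.roots.esymm (k-2) * q.roots.esymm k)) := by ring
      _ = (q.leadingCoeff * q.leadingCoeff) * (q.roots.esymm (k-2) * q.roots.esymm k) := by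
          rw [hsign, one_mul]
  nlinarith [mul_pos hc2 hck, mul_pos hLpos hLpos]

lemma segment_mem (n k : ℕ) (hkn : k ≤ n) (x : Fin n → ℝ)
    (hx : x ∈ GardingCone n k) {t : ℝ} (ht0 : 0 ≤ t) (ht1 : t ≤ 1) :
    (fun i => (1 - t) * x i + t) ∈ GardingCone n k := by
  intro j hj1 hjk
  have hjn : j ≤ n := le_trans hjk hkn
  have hexp := esymmR_add_const n j hjn t (fun i => (1 - t) * x i)
  rw [show (fun i => (fun i => (1 - t) * x i) i + t) = (fun i => (1 - t) * x i + t) from rfl]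
    at hexp
  rw [hexp]
  have hterm : ∀ m, m ≤ j →
      ((n - m).choose (j - m) : ℝ) * t ^ (j - m) * esymmR n m (fun i => (1 - t) * x i)
        = ((n - m).choose (j - m) : ℝ) * t ^ (j - m) * (1 - t) ^ m * esymmR n m x := by
    intro m _
    rw [esymmR_smul]; ring
  have hx0 : ∀ m, m ≤ j → 0 ≤ esymmR n m x ∧ (m = 0 → esymmR n m x = 1) := by
    intro m hm
    rcases Nat.eq_zero_or_pos m with rfl | hm1
    · exact ⟨by rw [esymmR_zero]; norm_num, fun _ => esymmR_zero n x⟩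
    · exact ⟨le_of_lt (hx m hm1 (le_trans hm hjk)), fun h => by omega⟩
  refine Finset.sum_pos' ?_ ?_
  · intro m hm
    rw [Finset.mem_range] at hm
    rw [hterm m (by omega)]
    have h1 : (0:ℝ) ≤ ((n - m).choose (j - m) : ℝ) := Nat.cast_nonneg _
    have h2 : (0:ℝ) ≤ t ^ (j - m) := pow_nonneg ht0 _
    have h3 : (0:ℝ) ≤ (1 - t) ^ m := pow_nonneg (by linarith) _
    have h4 := (hx0 m (by omega)).1
    positivity
  · by_cases ht : t < 1
    · refine ⟨j, Finset.self_mem_range_succ j, ?_⟩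
      rw [hterm j le_rfl]
      simp only [Nat.sub_self, pow_zero, Nat.choose_zero_right, Nat.cast_one, one_mul, mul_one]
      have hσ : 0 < esymmR n j x := hx j hj1 hjk
      have : (0:ℝ) < (1 - t) ^ j := pow_pos (by linarith) _
      positivity
    · have ht1' : t = 1 := le_antisymm ht1 (not_lt.mp ht)
      refine ⟨0, Finset.mem_range.mpr (by omega), ?_⟩
      rw [hterm 0 (by omega), (hx0 0 (by omega)).2 rfl, Nat.sub_zero, Nat.sub_zero, pow_zero]
      have hch : 0 < n.choose j := Nat.choose_pos hjn
      have : (0:ℝ) < (n.choose j : ℝ) := by exact_mod_cast hch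
      have h2 : (0:ℝ) < t ^ j := by rw [ht1']; norm_num
      nlinarith

lemma main_pos (k : ℕ) : ∀ n : ℕ, ∀ x : Fin n → ℝ, ∀ i : Fin n, 1 ≤ k → k ≤ n →
    x ∈ GardingCone n k → 0 < esymmR n (k - 1) (Function.update x i 0) := by
  induction k using Nat.strong_induction_on with
  | _ k ih =>
  intro n x i hk1 hkn hx
  rcases eq_or_lt_of_le hk1 with h1 | hk2
  · rw [← h1, esymmR_zero]; norm_num
  -- now 2 ≤ k
  have hk2 : 2 ≤ k := hk2
  -- nonvanishing of y ↦ σ_{k-1}(update y i 0) on Γ_k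
  have hnv : ∀ y : Fin n → ℝ, y ∈ GardingCone n k →
      esymmR n (k - 1) (Function.update y i 0) ≠ 0 := by
    intro y hy hzero
    have hupd := esymmR_succ_update n (k - 1) y i
    rw [show k - 1 + 1 = k by omega, hzero, mul_zero, add_zero] at hupd
    have hkpos : 0 < esymmR n k y := hy k (by omega) le_rfl
    have hμk : 0 < esymmR n k (Function.update y i 0) := by rw [← hupd]; exact hkpos
    have hμk2 : 0 < esymmR n (k - 2) (Function.update y i 0) := by
      rcases eq_or_lt_of_le hk2 with h2 | h3
    
      · rw [show k - 2 = 0 by omega, esymmR_zero]; norm_num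
      · have hy' : y ∈ GardingCone n (k - 1) := fun j hj1 hj2 => hy j hj1 (by omega)
        have := ih (k - 1) (by omega) n y i (by omega) (by omega) hy'
        rwa [show k - 1 - 1 = k - 2 by omega] at this
    have := newton_step n k hk2 hkn (Function.update y i 0) hzero
    nlinarith
  -- the path
  set φ : ℝ → ℝ :=
    fun t => esymmR n (k - 1) (Function.update (fun j => (1 - t) * x j + t) i 0) with hφ
  have hφc : Continuous φ := by
    rw [hφ]
    unfold esymmR
    refine continuous_finset_sum _ fun s _ => continuous_finset_prod _ fun j _ => ?_
    simp only [Function.update_apply]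
    by_cases hj : j = i
    · simp only [hj, if_true, if_pos rfl]
      exact continuous_const
    · simp only [hj, if_false]
      fun_prop
  have hφne : ∀ t : ℝ, t ∈ Set.Icc (0:ℝ) 1 → φ t ≠ 0 := by
    intro t ht
    exact hnv _ (segment_mem n k hkn x hx ht.1 ht.2)
  have hφ1 : 0 < φ 1 := by
    rw [hφ]
    simp only [sub_self, zero_mul, zero_add]
    rw [esymmR_update_eq]
    have hterm : ∀ s ∈ (univ.powersetCard (k-1)).filter (fun s => i ∉ s),
        (∏ _j ∈ s, (1:ℝ)) = 1 := fun s _ => Finset.prod_const_one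
    rw [Finset.sum_congr rfl hterm, Finset.sum_const, nsmul_eq_mul, mul_one]
    have hne : ((univ.powersetCard (k-1)).filter (fun s => i ∉ s)).Nonempty := by
      obtain ⟨s₀, hsub, hcard⟩ := Finset.exists_subset_card_eq (s := univ.erase i) (n := k - 1)
        (by rw [Finset.card_erase_of_mem (Finset.mem_univ i), Finset.card_univ,
          Fintype.card_fin]; omega)
      refine ⟨s₀, Finset.mem_filter.mpr ⟨Finset.mem_powersetCard.mpr
        ⟨Finset.subset_univ _, hcard⟩, fun hi => ?_⟩⟩
      exact (Finset.mem_erase.mp (hsub hi)).1 rfl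
    have := Finset.card_pos.mpr hne
    exact_mod_cast this
  have hφ0 : 0 < φ 0 := by
    rcases lt_trichotomy (φ 0) 0 with hneg | hzero | hpos
    · exfalso
      have hsub : Set.Icc (φ 0) (φ 1) ⊆ φ '' Set.Icc 0 1 :=
        intermediate_value_Icc (by norm_num) hφc.continuousOn
      obtain ⟨t, ht, hφt⟩ := hsub ⟨le_of_lt hneg, le_of_lt hφ1⟩
      exact hφne t ht hφt
    · exact absurd hzero (hφne 0 (by norm_num))
    · exact hpos
  have hx0 : (fun j => (1 - (0:ℝ)) * x j + 0) = x := by funext j; ring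
  have : φ 0 = esymmR n (k - 1) (Function.update x i 0) := by
    rw [hφ]
    simp only
    rw [hx0]
  rwa [this] at hφ0

/-- If `λ ∈ Γ_k` is arranged decreasingly, then
`0 < σ_{k-1;1}(λ) ≤ σ_{k-1;2}(λ) ≤ ⋯ ≤ σ_{k-1;n}(λ)`; in particular all
`σ_{k-1;i}(λ)` are positive.  Here `σ_{k;i}` denotes `σ_k` with the `i`-th entry
replaced by `0`. -/
theorem esymm_update_pos_monotone (n k : ℕ) (hk : 1 ≤ k) (hkn : k ≤ n)
    (x : Fin n → ℝ) (hx : x ∈ GardingCone n k)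
    (hdec : ∀ i j : Fin n, i ≤ j → x j ≤ x i) :
    (∀ i : Fin n, 0 < esymmR n (k - 1) (Function.update x i 0)) ∧
      ∀ i j : Fin n, i ≤ j →
        esymmR n (k - 1) (Function.update x i 0)
          ≤ esymmR n (k - 1) (Function.update x j 0) := by
  constructor
  · intro i
    exact main_pos k n x i hk hkn hx
  · intro i j hij
    rcases eq_or_lt_of_le hij with rfl | hlt
    · exact le_refl _
    have hne : i ≠ j := ne_of_lt hlt
    rcases eq_or_lt_of_le hk with h1 | hk2
    · rw [← h1]
      simp only [Nat.sub_self, esymmR_zero]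
      exact le_refl _
    have hk2 : 2 ≤ k := hk2
    set u := Function.update x i 0 with hu
    set v := Function.update x j 0 with hv
    set w := Function.update u j 0 with hw
    have hw' : Function.update v i 0 = w := by
      rw [hw, hu, hv, Function.update_comm hne]
    have eq1 : esymmR n (k - 1) u
        = esymmR n (k - 1) w + x j * esymmR n (k - 2) w := by
      have := esymmR_succ_update n (k - 2) u j
      rw [show k - 2 + 1 = k - 1 by omega] at this
      rw [this, hu]
      rw [Function.update_of_ne (Ne.symm hne)]
    have eq2 : esymmR n (k - 1) v
        = esymmR n (k - 1) w + x i * esymmR n (k - 2) w := by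
      have := esymmR_succ_update n (k - 2) v i
      rw [show k - 2 + 1 = k - 1 by omega, hw'] at this
      rw [this, hv, Function.update_of_ne hne]
    -- u ∈ Γ_{k-1}
    have hu_mem : u ∈ GardingCone n (k - 1) := by
      intro m hm1 hm2
      have hxm : x ∈ GardingCone n (m + 1) := fun l hl1 hl2 => hx l hl1 (by omega)
      have := main_pos (m + 1) n x i (by omega) (by omega) hxm
      rwa [Nat.add_sub_cancel] at this
    have hw_pos : 0 < esymmR n (k - 2) w := by
      have := main_pos (k - 1) n u j (by omega) (by omega) hu_mem
      rwa [show k - 1 - 1 = k - 2 by omega] at this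
    have hxij : x j ≤ x i := hdec i j hij
    rw [eq1, eq2]
    nlinarith
end

section
/- Let 1 ≤ k ≤ n and λ ∈ Γ_k. Then σ_{k−1}(λ) ≥ (k/(n−k+1)) · (binom(n,k))^{1/k} · (σ_k(λ))^{(k−1)/k}, where binom(n,k) is the binomial coefficient. -/
open Finset Real

section NewtonMaclaurinAux

open Polynomial Multiset

lemma esymm_cons' (a : ℝ) (s : Multiset ℝ) (n : ℕ) :
    (a ::ₘ s).esymm (n+1) = s.esymm (n+1) + a * s.esymm n := by
  rw [Multiset.esymm, Multiset.powersetCard_cons, Multiset.map_add, Multiset.sum_add,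
    Multiset.map_map]
  congr 1
  rw [Multiset.esymm, ← Multiset.sum_map_mul_left]
  congr 1
  simp [Function.comp_def, Multiset.map_map]

lemma esymm_zero' (s : Multiset ℝ) : s.esymm 0 = 1 := by
  simp [Multiset.esymm]

lemma esymm_nil (n : ℕ) : (0 : Multiset ℝ).esymm (n+1) = 0 := by
  simp [Multiset.esymm, Multiset.powersetCard_zero_right]

lemma esymm_eq_zero_of_lt {s : Multiset ℝ} {n : ℕ} (h : Multiset.card s < n) :
    s.esymm n = 0 := by
  simp [Multiset.esymm, Multiset.powersetCard_eq_empty _ h]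

lemma esymm_one' (s : Multiset ℝ) : s.esymm 1 = s.sum := by
  induction s using Multiset.induction with
  | empty => simp [esymm_nil]
  | cons a s ih => rw [esymm_cons', ih, esymm_zero']; simp [add_comm]

lemma esymm_card_eq_prod (s : Multiset ℝ) : s.esymm (Multiset.card s) = s.prod := by
  induction s using Multiset.induction with
  | empty => simp [esymm_zero']
  | cons a s ih =>
      rw [Multiset.card_cons, esymm_cons', esymm_eq_zero_of_lt (Nat.lt_succ_self _), ih]
      simp

lemma sum_sq_expand (s : Multiset ℝ) :
    s.sum ^ 2 = (s.map (fun x => x^2)).sum + 2 * s.esymm 2 := by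
  induction s using Multiset.induction with
  | empty => simp [esymm_nil]
  | cons a s ih =>
      rw [Multiset.sum_cons, Multiset.map_cons, Multiset.sum_cons,
        show (2:ℕ) = 1 + 1 from rfl, esymm_cons', esymm_one']
      ring_nf
      nlinarith [ih]

lemma helper_two_mul (a : ℝ) (s : Multiset ℝ) :
    2 * a * s.sum ≤ (Multiset.card s : ℝ) * a ^ 2 + (s.map (fun x => x^2)).sum := by
  induction s using Multiset.induction with
  | empty => simp
  | cons b s ih =>
      rw [Multiset.sum_cons, Multiset.map_cons, Multiset.sum_cons, Multiset.card_cons]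
      push_cast
      nlinarith [two_mul_le_add_sq a b, ih]

lemma cauchy_multiset (s : Multiset ℝ) :
    s.sum ^ 2 ≤ (Multiset.card s : ℝ) * (s.map (fun x => x^2)).sum := by
  induction s using Multiset.induction with
  | empty => simp
  | cons a s ih =>
      rw [Multiset.sum_cons, Multiset.map_cons, Multiset.sum_cons, Multiset.card_cons]
      push_cast
      nlinarith [helper_two_mul a s, Nat.cast_nonneg (α := ℝ) (Multiset.card s)]

lemma newton_one (s : Multiset ℝ) :
    2 * (Multiset.card s : ℝ) * s.esymm 2 ≤ ((Multiset.card s : ℝ) - 1) * s.sum ^ 2 := by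
  nlinarith [sum_sq_expand s, cauchy_multiset s]

lemma esymm_inv (s : Multiset ℝ) (h0 : ∀ x ∈ s, x ≠ 0) :
    ∀ j, j ≤ Multiset.card s →
      (s.map (fun x => x⁻¹)).esymm j * s.prod = s.esymm (Multiset.card s - j) := by
  induction s using Multiset.induction with
  | empty =>
      intro j hj
      simp at hj
      simp [hj, esymm_zero']
  | cons a s ih =>
      intro j hj
      have ha : a ≠ 0 := h0 a (Multiset.mem_cons_self a s)
      have h0' : ∀ x ∈ s, x ≠ 0 := fun x hx => h0 x (Multiset.mem_cons_of_mem hx)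
      rcases j with _ | i
      · have := esymm_card_eq_prod (a ::ₘ s)
        rw [Multiset.card_cons] at this
        simp [esymm_zero', this]
      · rw [Multiset.card_cons] at hj ⊢
        rw [Multiset.map_cons, esymm_cons', Multiset.prod_cons, add_mul]
        have key1 : (s.map (fun x => x⁻¹)).esymm (i+1) * (a * s.prod)
            = a * ((s.map (fun x => x⁻¹)).esymm (i+1) * s.prod) := by ring
        have key2 : a⁻¹ * (s.map (fun x => x⁻¹)).esymm i * (a * s.prod)
            = (a⁻¹ * a) * ((s.map (fun x => x⁻¹)).esymm i * s.prod) := by ring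
        rw [key1, key2, inv_mul_cancel₀ ha, one_mul,
          ih h0' i (by omega)]
        rcases Nat.lt_or_ge (i+1) (Multiset.card s + 1) with hlt | hge
        · -- i + 1 ≤ card s
          rw [ih h0' (i+1) (by omega)]
          have hc : Multiset.card s + 1 - (i+1) = (Multiset.card s - (i+1)) + 1 := by omega
          have hc2 : Multiset.card s - i = (Multiset.card s - (i+1)) + 1 := by omega
          rw [hc, esymm_cons', hc2]
          ring
        · -- i = card s
          have hi : i = Multiset.card s := by omega
          have hz : (s.map (fun x => x⁻¹)).esymm (i+1) = 0 := by
            apply esymm_eq_zero_of_lt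
            rw [Multiset.card_map]; omega
          rw [hz, hi]
          simp [esymm_zero']

lemma newton_base_cleared (s : Multiset ℝ) (j : ℕ) (hj : 1 ≤ j)
    (hcard : Multiset.card s = j + 1) :
    2 * ((j:ℝ) + 1) * (s.esymm (j-1) * s.esymm (j+1)) ≤ (j:ℝ) * s.esymm j ^ 2 := by
  by_cases hz : ∃ x ∈ s, x = 0
  · obtain ⟨x, hx, hx0⟩ := hz
    have hprod : s.prod = 0 := Multiset.prod_eq_zero (hx0 ▸ hx)
    have : s.esymm (j+1) = 0 := by rw [← hcard, esymm_card_eq_prod, hprod]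
    rw [this]
    nlinarith [sq_nonneg (s.esymm j), (by positivity : (0:ℝ) ≤ (j:ℝ))]
  · push_neg at hz
    set u := s.map (fun x => x⁻¹) with hu
    have hcu : Multiset.card u = j + 1 := by rw [hu, Multiset.card_map, hcard]
    have h1 := esymm_inv s hz 1 (by omega)
    have h2 := esymm_inv s hz 2 (by omega)
    rw [hcard] at h1 h2
    have hprod : s.prod = s.esymm (j+1) := by rw [← hcard, esymm_card_eq_prod]
    have hb := newton_one u
    rw [hcu] at hb
    have hmul := mul_le_mul_of_nonneg_right hb (sq_nonneg s.prod)
    have e2 : u.esymm 2 * s.prod ^ 2 = s.esymm (j-1) * s.esymm (j+1) := by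
      have : j + 1 - 2 = j - 1 := by omega
      calc u.esymm 2 * s.prod ^ 2 = (u.esymm 2 * s.prod) * s.prod := by ring
      _ = s.esymm (j-1) * s.esymm (j+1) := by rw [h2, this, hprod]
    have e1 : u.sum ^ 2 * s.prod ^ 2 = s.esymm j ^ 2 := by
      have : j + 1 - 1 = j := by omega
      calc u.sum ^ 2 * s.prod ^ 2 = (u.esymm 1 * s.prod)^2 := by rw [esymm_one' u]; ring
      _ = s.esymm j ^ 2 := by rw [h1, this]
    push_cast at hmul ⊢
    nlinarith [hmul, e1, e2]

lemma deriv_step (s : Multiset ℝ) (h1 : 1 ≤ Multiset.card s) :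
    ∃ t : Multiset ℝ, Multiset.card t = Multiset.card s - 1 ∧
      ∀ j, j ≤ Multiset.card s - 1 →
        (Multiset.card s : ℝ) * t.esymm j = ((Multiset.card s - j : ℕ) : ℝ) * s.esymm j := by
  classical
  set n := Multiset.card s with hn
  set p : ℝ[X] := (s.map (fun a => X - C a)).prod with hp
  have hmonic : p.Monic := by
    apply monic_multiset_prod_of_monic
    intro a _
    exact monic_X_sub_C a
  have hdeg : p.natDegree = n := by
    rw [hp, natDegree_multiset_prod_X_sub_C_eq_card]
  have hroots : p.roots = s := roots_multiset_prod_X_sub_C s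
  set q := derivative p with hq
  have hqcoeff : q.coeff (n-1) = n := by
    have h := coeff_derivative p (n-1)
    have hn1 : n - 1 + 1 = n := by omega
    rw [hn1] at h
    have : p.coeff n = 1 := by
      have := hmonic.coeff_natDegree
      rwa [hdeg] at this
    rw [h, this, one_mul, Nat.cast_sub h1]
    push_cast
    ring
  have hqne : q ≠ 0 := by
    intro h0
    rw [h0, coeff_zero] at hqcoeff
    have : (n:ℝ) ≠ 0 := by positivity
    exact this hqcoeff.symm
  have hqdegle : q.natDegree ≤ n - 1 := by
    have := natDegree_derivative_le p
    rw [hdeg] at this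
    exact this
  have hqdegge : n - 1 ≤ q.natDegree := by
    apply le_natDegree_of_ne_zero
    rw [hqcoeff]
    positivity
  have hqdeg : q.natDegree = n - 1 := le_antisymm hqdegle hqdegge
  have hcard_ge : n - 1 ≤ Multiset.card q.roots := by
    have h2 := p.card_roots_le_derivative
    rw [hroots] at h2
    show n - 1 ≤ Multiset.card (derivative p).roots
    omega
  have hcard : Multiset.card q.roots = q.natDegree :=
    le_antisymm (q.card_roots' ) (hqdeg ▸ hcard_ge)
  have hlc : q.leadingCoeff = n := by
    rw [leadingCoeff, hqdeg, hqcoeff]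
  refine ⟨q.roots, by rw [hcard, hqdeg], ?_⟩
  intro j hj
  have hsub1 : q.natDegree - ((n-1) - j) = j := by omega
  have hsub2 : (n-1) - j ≤ q.natDegree := by omega
  have e1 := Polynomial.coeff_eq_esymm_roots_of_card hcard hsub2
  rw [hsub1, hlc] at e1
  have e2 := coeff_derivative p ((n-1) - j)
  have hsub3 : (n-1) - j + 1 = n - j := by omega
  rw [hsub3] at e2
  have e3 : p.coeff (n - j) = (-1)^j * s.esymm j := by
    have hle : n - j ≤ Multiset.card s := by omega
    have := Multiset.prod_X_sub_C_coeff s hle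
    rw [← hn] at this
    have hsub4 : n - (n - j) = j := by omega
    rw [hsub4] at this
    exact this
  have hne : ((-1:ℝ))^j ≠ 0 := by
    apply pow_ne_zero; norm_num
  apply mul_left_cancel₀ hne
  have hcast : (((n-1) - j : ℕ) : ℝ) + 1 = ((n - j : ℕ) : ℝ) := by
    push_cast [Nat.cast_sub (show j ≤ n - 1 from hj), Nat.cast_sub (show j ≤ n from by omega),
      Nat.cast_sub (show 1 ≤ n from h1)]
    ring
  calc (-1:ℝ)^j * ((n:ℝ) * q.roots.esymm j)
      = (n:ℝ) * ((-1:ℝ)^j * q.roots.esymm j) := by ring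
    _ = q.coeff ((n-1) - j) := by rw [e1]; ring
    _ = p.coeff (n - j) * ((n - j : ℕ) : ℝ) := by rw [hq, e2, hcast]
    _ = (-1:ℝ)^j * (((n - j : ℕ) : ℝ) * s.esymm j) := by rw [e3]; ring

noncomputable def Eavg (s : Multiset ℝ) (j : ℕ) : ℝ :=
  s.esymm j / ((Multiset.card s).choose j)

lemma choose_identity (n j : ℕ) (h1 : 1 ≤ n) :
    (n - j) * n.choose j = n * (n-1).choose j := by
  have h2 := Nat.choose_succ_right_eq n j
  have h3 := Nat.add_one_mul_choose_eq (n-1) j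
  have h4 : (n-1) + 1 = n := by omega
  rw [h4] at h3
  calc (n - j) * n.choose j = n.choose j * (n - j) := Nat.mul_comm _ _
    _ = n.choose (j+1) * (j+1) := h2.symm
    _ = n * (n-1).choose j := h3.symm

lemma Eavg_preserved (s t : Multiset ℝ) (j : ℕ) (hs1 : 1 ≤ Multiset.card s)
    (hcard : Multiset.card t = Multiset.card s - 1)
    (hj : j ≤ Multiset.card s - 1)
    (heq : (Multiset.card s : ℝ) * t.esymm j
      = ((Multiset.card s - j : ℕ) : ℝ) * s.esymm j) :
    Eavg t j = Eavg s j := by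
  set n := Multiset.card s with hn
  have h1 : 1 ≤ n := hs1
  rw [Eavg, Eavg, hcard, ← hn]
  have hc1 : (0:ℝ) < ((n-1).choose j : ℝ) := by
    exact_mod_cast Nat.cast_pos.mpr (Nat.choose_pos (by omega))
  have hc2 : (0:ℝ) < (n.choose j : ℝ) := by
    exact_mod_cast Nat.cast_pos.mpr (Nat.choose_pos (by omega))
  rw [div_eq_div_iff (ne_of_gt hc1) (ne_of_gt hc2)]
  have hid : ((n - j : ℕ) : ℝ) * (n.choose j : ℝ) = (n : ℝ) * ((n-1).choose j : ℝ) := by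
    exact_mod_cast congrArg (Nat.cast : ℕ → ℝ) (choose_identity n j h1)
  have hnpos : (0:ℝ) < (n:ℝ) := by exact_mod_cast h1
  apply mul_left_cancel₀ (ne_of_gt hnpos)
  calc (n:ℝ) * (t.esymm j * (n.choose j : ℝ)) = ((n:ℝ) * t.esymm j) * (n.choose j : ℝ) := by ring
    _ = ((n - j : ℕ) : ℝ) * s.esymm j * (n.choose j : ℝ) := by rw [heq]
    _ = s.esymm j * (((n - j : ℕ) : ℝ) * (n.choose j : ℝ)) := by ring
    _ = s.esymm j * ((n : ℝ) * ((n-1).choose j : ℝ)) := by rw [hid]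
    _ = (n:ℝ) * (s.esymm j * ((n-1).choose j : ℝ)) := by ring

lemma newton_E : ∀ (m : ℕ) (s : Multiset ℝ) (j : ℕ), 1 ≤ j →
    Multiset.card s = j + 1 + m →
    Eavg s (j-1) * Eavg s (j+1) ≤ Eavg s j ^ 2 := by
  intro m
  induction m with
  | zero =>
      intro s j hj hcard
      have hb := newton_base_cleared s j hj (by omega)
      set n := j + 1 with hn
      have hC2 : (2:ℝ) * ((j+1).choose 2 : ℝ) = ((j:ℝ)+1) * (j:ℝ) := by
        have h := Nat.choose_succ_right_eq (j+1) 1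
        have : (j+1).choose 2 * 2 = (j+1) * j := by
          simpa [Nat.choose_one_right] using h
        have := congrArg (Nat.cast : ℕ → ℝ) this
        push_cast at this
        linarith
      have hch : (Multiset.card s).choose (j-1) = (j+1).choose 2 := by
        rw [hcard]
        have : j - 1 = (j+1) - 2 := by omega
        rw [this, Nat.choose_symm (by omega)]
      have hchj : ((Multiset.card s).choose j : ℝ) = (j:ℝ) + 1 := by
        rw [hcard]
        have : (j+1).choose j = j + 1 := by
          rw [← Nat.choose_symm (by omega)]
          simp
        rw [this]; push_cast; ring
      have hchj1 : (Multiset.card s).choose (j+1) = 1 := by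
        rw [hcard, Nat.choose_self]
      rw [Eavg, Eavg, Eavg, hch, hchj, hchj1]
      have hC2pos : (0:ℝ) < ((j+1).choose 2 : ℝ) := by
        exact_mod_cast Nat.choose_pos (by omega)
      have hjpos : (0:ℝ) < (j:ℝ) + 1 := by positivity
      rw [Nat.cast_one, div_one, div_mul_eq_mul_div, div_pow, div_le_div_iff₀ hC2pos (by positivity)]
      nlinarith [hb, hC2pos, sq_nonneg (s.esymm j)]
  | succ m ih =>
      intro s j hj hcard
      obtain ⟨t, hct, hpres⟩ := deriv_step s (by omega)
      have hct' : Multiset.card t = j + 1 + m := by omega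
      have e1 : Eavg t (j-1) = Eavg s (j-1) :=
        Eavg_preserved s t _ (by omega) hct (by omega) (hpres _ (by omega))
      have e2 : Eavg t j = Eavg s j :=
        Eavg_preserved s t _ (by omega) hct (by omega) (hpres _ (by omega))
      have e3 : Eavg t (j+1) = Eavg s (j+1) :=
        Eavg_preserved s t _ (by omega) hct (by omega) (hpres _ (by omega))
      rw [← e1, ← e2, ← e3]
      exact ih t j hj hct'

lemma newton_ineq (s : Multiset ℝ) (j : ℕ) (hj : 1 ≤ j)
    (hjs : j + 1 ≤ Multiset.card s) :
    Eavg s (j-1) * Eavg s (j+1) ≤ Eavg s j ^ 2 :=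
  newton_E (Multiset.card s - (j+1)) s j hj (by omega)

end NewtonMaclaurinAux

open Multiset in


lemma Eavg_pos (s : Multiset ℝ) (k j : ℕ) (hjk : j ≤ k) (hkn : k ≤ Multiset.card s)
    (hpos : ∀ i, 1 ≤ i → i ≤ k → 0 < s.esymm i) : 0 < Eavg s j := by
  rcases Nat.eq_zero_or_pos j with hj0 | hj1
  · rw [hj0, Eavg, esymm_zero']
    simp
  · exact div_pos (hpos j hj1 hjk)
      (by exact_mod_cast Nat.choose_pos (le_trans hjk hkn))

lemma maclaurin_chain (s : Multiset ℝ) (k : ℕ) (hkn : k ≤ Multiset.card s)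
    (hpos : ∀ i, 1 ≤ i → i ≤ k → 0 < s.esymm i) :
    ∀ m, 1 ≤ m → m ≤ k → Eavg s m ^ (m-1) ≤ Eavg s (m-1) ^ m := by
  intro m hm
  induction m, hm using Nat.le_induction with
  | base =>
      intro _
      simp [Eavg, esymm_zero']
  | succ m hm ih =>
      intro hmk
      have hEpos : ∀ j, j ≤ k → 0 < Eavg s j :=
        fun j hj => Eavg_pos s k j hj hkn hpos
      have hN := newton_ineq s m (by omega) (by omega)
      have hm1 : m - 1 + 1 = m := by omega
      have hIH := ih (by omega)
      have pm1 := hEpos (m-1) (by omega)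
      have pm := hEpos m (by omega)
      have pm2 := hEpos (m+1) (by omega)
      have h2 : (Eavg s (m-1) * Eavg s (m+1)) ^ m ≤ (Eavg s m ^ 2) ^ m :=
        pow_le_pow_left₀ (by positivity) hN m
      have h3 : Eavg s (m+1) ^ m * Eavg s m ^ (m-1)
          ≤ Eavg s m ^ (m+1) * Eavg s m ^ (m-1) := by
        calc Eavg s (m+1) ^ m * Eavg s m ^ (m-1)
            ≤ Eavg s (m+1) ^ m * Eavg s (m-1) ^ m :=
              mul_le_mul_of_nonneg_left hIH (by positivity)
          _ = (Eavg s (m-1) * Eavg s (m+1)) ^ m := by rw [mul_pow]; ring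
          _ ≤ (Eavg s m ^ 2) ^ m := h2
          _ = Eavg s m ^ (m+1) * Eavg s m ^ (m-1) := by
              rw [← pow_mul, ← pow_add]
              congr 1
              omega
      have h4 : (0:ℝ) < Eavg s m ^ (m-1) := by positivity
      have := le_of_mul_le_mul_right h3 h4
      simpa using this

/-- The Maclaurin–Newton type inequality
`σ_{k-1}(λ) ≥ (k/(n-k+1)) (binom(n,k))^{1/k} (σ_k(λ))^{(k-1)/k}` for `λ ∈ Γ_k`. -/
theorem esymm_pred_ge_rpow (n k : ℕ) (hk : 1 ≤ k) (hkn : k ≤ n)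
    (x : Fin n → ℝ) (hx : x ∈ GardingCone n k) :
    ((k : ℝ) / ((n : ℝ) - (k : ℝ) + 1)) * (n.choose k : ℝ) ^ ((1 : ℝ) / k)
        * (esymmR n k x) ^ (((k : ℝ) - 1) / k)
      ≤ esymmR n (k - 1) x := by
  set s : Multiset ℝ := Multiset.map x Finset.univ.val with hs
  have hcs : Multiset.card s = n := by simp [hs]
  have hesymmR : ∀ j, esymmR n j x = s.esymm j := by
    intro j
    rw [esymmR, hs]
    exact (Finset.esymm_map_val x Finset.univ j).symm
  have hpos : ∀ i, 1 ≤ i → i ≤ k → 0 < s.esymm i := by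
    intro i h1 h2
    rw [← hesymmR]
    exact hx i h1 h2
  have hEpos : ∀ j, j ≤ k → 0 < Eavg s j :=
    fun j hj => Eavg_pos s k j hj (hcs ▸ hkn) hpos
  have hchain := maclaurin_chain s k (hcs ▸ hkn) hpos k hk le_rfl
  have hk0 : (k:ℝ) ≠ 0 := by positivity
  have pk := hEpos k le_rfl
  have pk1 := hEpos (k-1) (by omega)
  -- rpow form of the chain
  have key : Eavg s k ^ (((k:ℝ)-1)/k) ≤ Eavg s (k-1) := by
    have h := Real.rpow_le_rpow (by positivity) hchain
      (by positivity : (0:ℝ) ≤ 1/(k:ℝ))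
    rw [← Real.rpow_natCast (Eavg s k) (k-1), ← Real.rpow_natCast (Eavg s (k-1)) k,
      ← Real.rpow_mul pk.le, ← Real.rpow_mul pk1.le] at h
    have e1 : ((k-1:ℕ):ℝ) * (1/(k:ℝ)) = ((k:ℝ)-1)/k := by
      rw [Nat.cast_sub hk]
      push_cast
      field_simp
    have e2 : ((k:ℕ):ℝ) * (1/(k:ℝ)) = 1 := by field_simp
    rw [e1, e2, Real.rpow_one] at h
    exact h
  -- choose positivity and identities
  have hCpos : (0:ℝ) < (n.choose k : ℝ) := by exact_mod_cast Nat.choose_pos hkn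
  have hC1pos : (0:ℝ) < (n.choose (k-1) : ℝ) := by
    exact_mod_cast Nat.choose_pos (by omega)
  have hden : (0:ℝ) < (n:ℝ) - (k:ℝ) + 1 := by
    have : (k:ℝ) ≤ (n:ℝ) := by exact_mod_cast hkn
    linarith
  have hfac : (k:ℝ) / ((n:ℝ) - (k:ℝ) + 1) * (n.choose k : ℝ) = (n.choose (k-1) : ℝ) := by
    have hnat := Nat.choose_succ_right_eq n (k-1)
    have hks : k - 1 + 1 = k := by omega
    rw [hks] at hnat
    have hcast := congrArg (Nat.cast : ℕ → ℝ) hnat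
    push_cast [Nat.cast_sub (show k - 1 ≤ n by omega), Nat.cast_sub hk] at hcast
    rw [div_mul_eq_mul_div, div_eq_iff (ne_of_gt hden)]
    linarith
  -- rewrite esymm via Eavg
  have hsk : esymmR n k x = (n.choose k : ℝ) * Eavg s k := by
    rw [hesymmR, Eavg, hcs]
    field_simp
  have hsk1 : esymmR n (k-1) x = (n.choose (k-1) : ℝ) * Eavg s (k-1) := by
    rw [hesymmR, Eavg, hcs]
    field_simp
  rw [hsk, hsk1]
  have hrw : ((n.choose k : ℝ) * Eavg s k) ^ (((k:ℝ)-1)/k)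
      = (n.choose k : ℝ) ^ (((k:ℝ)-1)/k) * Eavg s k ^ (((k:ℝ)-1)/k) :=
    Real.mul_rpow hCpos.le pk.le
  rw [hrw]
  have hcomb : ((k : ℝ) / ((n : ℝ) - (k : ℝ) + 1)) * (n.choose k : ℝ) ^ ((1 : ℝ) / k)
      * ((n.choose k : ℝ) ^ (((k:ℝ)-1)/k) * Eavg s k ^ (((k:ℝ)-1)/k))
      = (n.choose (k-1) : ℝ) * Eavg s k ^ (((k:ℝ)-1)/k) := by
    have hadd : (n.choose k : ℝ) ^ ((1:ℝ)/k) * (n.choose k : ℝ) ^ (((k:ℝ)-1)/k)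
        = (n.choose k : ℝ) := by
      rw [← Real.rpow_add hCpos]
      have : (1:ℝ)/k + ((k:ℝ)-1)/k = 1 := by field_simp; ring
      rw [this, Real.rpow_one]
    calc ((k : ℝ) / ((n : ℝ) - (k : ℝ) + 1)) * (n.choose k : ℝ) ^ ((1 : ℝ) / k)
      * ((n.choose k : ℝ) ^ (((k:ℝ)-1)/k) * Eavg s k ^ (((k:ℝ)-1)/k))
        = ((k : ℝ) / ((n : ℝ) - (k : ℝ) + 1)) *
          ((n.choose k : ℝ) ^ ((1:ℝ)/k) * (n.choose k : ℝ) ^ (((k:ℝ)-1)/k)) *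
          Eavg s k ^ (((k:ℝ)-1)/k) := by ring
      _ = (n.choose (k-1) : ℝ) * Eavg s k ^ (((k:ℝ)-1)/k) := by rw [hadd, hfac]
  rw [hcomb]
  exact mul_le_mul_of_nonneg_left key hC1pos.le
end

section
/- Let n ≥ 3 and for ε > 0 let v_ε(x) = (ε/(ε² + |x|²))^{(n−2)/2} on ℝ^n. Then the integral ∫_{ℝ^n} v_ε(x)^{2n/(n−2)} dx is finite and independent of ε (it equals ∫_{ℝ^n} v_1(x)^{2n/(n−2)} dx for every ε > 0), and for every 1 ≤ k ≤ n, ∫_{ℝ^n} v_ε(x)^{(2n−4k)/(n−2)} σ_k(λ(V[v_ε](x)/v_ε(x))) dx = C_{n,k} ∫_{ℝ^n} v_ε(x)^{2n/(n−2)} dx, where C_{n,k} = binom(n,k)(n−2)^k. -/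
open Finset

/-- The `i`-th partial derivative `∂_i u (x)`. -/
noncomputable def egrad (n : ℕ) (u : (Fin n → ℝ) → ℝ) (x : Fin n → ℝ) (i : Fin n) : ℝ :=
  fderiv ℝ u x (Pi.single i 1)

/-- The squared Euclidean length `|∇u(x)|²` of the gradient. -/
noncomputable def gradSq (n : ℕ) (u : (Fin n → ℝ) → ℝ) (x : Fin n → ℝ) : ℝ :=
  ∑ i : Fin n, (egrad n u x i) ^ 2

/-- The Hessian entry `∂_i∂_j u(x)`. -/
noncomputable def ehess (n : ℕ) (u : (Fin n → ℝ) → ℝ) (x : Fin n → ℝ) (i j : Fin n) : ℝ :=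
  fderiv ℝ (fun y => fderiv ℝ u y (Pi.single j 1)) x (Pi.single i 1)

/-- The matrix `V[v](x) = -∇²v + (n/(n-2)) (∇v ⊗ ∇v)/v - (1/(n-2)) (|∇v|²/v) I`. -/
noncomputable def Vmat (n : ℕ) (v : (Fin n → ℝ) → ℝ) (x : Fin n → ℝ) :
    Matrix (Fin n) (Fin n) ℝ :=
  Matrix.of fun i j =>
    -ehess n v x i j + ((n : ℝ) / ((n : ℝ) - 2)) * (egrad n v x i * egrad n v x j) / v x
      - (1 / ((n : ℝ) - 2)) * (gradSq n v x / v x) * (if i = j then 1 else 0)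

/-- The standard bubble `v_ε(x) = (ε/(ε² + |x|²))^{(n-2)/2}`. -/
noncomputable def bubble (n : ℕ) (ε : ℝ) (x : Fin n → ℝ) : ℝ :=
  (ε / (ε ^ 2 + ∑ i : Fin n, (x i) ^ 2)) ^ (((n : ℝ) - 2) / 2)

/-- `σ_k(λ(M))` for a symmetric matrix `M`, expressed as the sum of all `k × k`
principal minors of `M`. -/
noncomputable def sigmaMinors (n k : ℕ) (M : Matrix (Fin n) (Fin n) ℝ) : ℝ :=
  ∑ s ∈ Finset.univ.powersetCard k,
    (M.submatrix (Subtype.val : {i // i ∈ s} → Fin n) Subtype.val).det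


section BubbleAux

open MeasureTheory

noncomputable def Q (n : ℕ) (x : Fin n → ℝ) : ℝ := ∑ i, x i ^ 2

lemma hasFDerivAt_Q (n : ℕ) (x : Fin n → ℝ) :
    HasFDerivAt (Q n)
      (∑ i : Fin n, (2 * x i) • ContinuousLinearMap.proj (R := ℝ) (φ := fun _ : Fin n => ℝ) i) x := by
  apply HasFDerivAt.fun_sum
  intro i _
  have := (hasFDerivAt_apply (𝕜 := ℝ) i x).fun_mul (hasFDerivAt_apply (𝕜 := ℝ) i x)
  simp only [pow_two]
  rw [two_mul, add_smul]
  exact this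

lemma Qderiv_apply (n : ℕ) (x : Fin n → ℝ) (j : Fin n) :
    (∑ i : Fin n, (2 * x i) • ContinuousLinearMap.proj (R := ℝ) (φ := fun _ : Fin n => ℝ) i)
      (Pi.single j 1) = 2 * x j := by
  simp [ContinuousLinearMap.sum_apply, ContinuousLinearMap.proj_apply, Pi.single_apply]

noncomputable def cc (n : ℕ) : ℝ := ((n : ℝ) - 2) / 2
noncomputable def S (n : ℕ) (ε : ℝ) (x : Fin n → ℝ) : ℝ := ε ^ 2 + Q n x

lemma Q_nonneg (n : ℕ) (x : Fin n → ℝ) : 0 ≤ Q n x :=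
  Finset.sum_nonneg fun i _ => sq_nonneg _

lemma S_pos {n : ℕ} {ε : ℝ} (hε : 0 < ε) (x : Fin n → ℝ) : 0 < S n ε x :=
  add_pos_of_pos_of_nonneg (by positivity) (Q_nonneg n x)

lemma hasFDerivAt_S (n : ℕ) (ε : ℝ) (x : Fin n → ℝ) :
    HasFDerivAt (S n ε)
      (∑ i : Fin n, (2 * x i) • ContinuousLinearMap.proj (R := ℝ) (φ := fun _ : Fin n => ℝ) i) x :=
  (hasFDerivAt_Q n x).const_add (ε ^ 2)

lemma bubble_eq (n : ℕ) {ε : ℝ} (hε : 0 < ε) :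
    bubble n ε = fun y => ε ^ cc n * (S n ε y) ^ (-(cc n)) := by
  funext y
  have hS : (0:ℝ) < ε ^ 2 + ∑ i, y i ^ 2 := S_pos hε y
  rw [bubble, cc, S, Q]
  rw [Real.div_rpow hε.le hS.le, Real.rpow_neg hS.le, div_eq_mul_inv]

lemma hasFDerivAt_bubble (n : ℕ) {ε : ℝ} (hε : 0 < ε) (x : Fin n → ℝ) :
    HasFDerivAt (bubble n ε)
      (-((ε ^ cc n * (cc n * S n ε x ^ (-(cc n) - 1))) •
        (∑ i : Fin n, (2 * x i) • ContinuousLinearMap.proj (R := ℝ) (φ := fun _ : Fin n => ℝ) i))) x := by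
  rw [bubble_eq n hε]
  have h := ((hasFDerivAt_S n ε x).rpow_const (p := -(cc n)) (Or.inl (S_pos hε x).ne')).const_mul
    (ε ^ cc n)
  simpa [smul_smul] using h

end BubbleAux

section BubbleAux2
open MeasureTheory

lemma egrad_bubble (n : ℕ) {ε : ℝ} (hε : 0 < ε) (x : Fin n → ℝ) (j : Fin n) :
    egrad n (bubble n ε) x j
      = -(((n:ℝ) - 2) * ε ^ cc n) * (x j * S n ε x ^ (-(cc n) - 1)) := by
  rw [egrad, (hasFDerivAt_bubble n hε x).fderiv]
  simp only [ContinuousLinearMap.neg_apply, ContinuousLinearMap.smul_apply, Qderiv_apply,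
    smul_eq_mul, cc]
  ring

lemma fderiv_bubble_single (n : ℕ) {ε : ℝ} (hε : 0 < ε) (j : Fin n) :
    (fun y => fderiv ℝ (bubble n ε) y (Pi.single j 1)) =
      fun y => -(((n:ℝ) - 2) * ε ^ cc n) * (y j * S n ε y ^ (-(cc n) - 1)) := by
  funext y
  exact egrad_bubble n hε y j

lemma hasFDerivAt_gj (n : ℕ) {ε : ℝ} (hε : 0 < ε) (x : Fin n → ℝ) (j : Fin n) :
    HasFDerivAt (fun y => y j * S n ε y ^ (-(cc n) - 1))
      (x j • (((-(cc n) - 1) * S n ε x ^ (-(cc n) - 1 - 1)) •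
          (∑ i : Fin n, (2 * x i) • ContinuousLinearMap.proj (R := ℝ) (φ := fun _ : Fin n => ℝ) i))
        + S n ε x ^ (-(cc n) - 1) • ContinuousLinearMap.proj j) x :=
  (hasFDerivAt_apply (𝕜 := ℝ) j x).mul
    ((hasFDerivAt_S n ε x).rpow_const (Or.inl (S_pos hε x).ne'))

lemma ehess_bubble (n : ℕ) {ε : ℝ} (hε : 0 < ε) (x : Fin n → ℝ) (i j : Fin n) :
    ehess n (bubble n ε) x i j
      = -(((n:ℝ) - 2) * ε ^ cc n) *
          (x j * ((-(cc n) - 1) * S n ε x ^ (-(cc n) - 1 - 1)) * (2 * x i)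
            + (if i = j then 1 else 0) * S n ε x ^ (-(cc n) - 1)) := by
  rw [ehess, fderiv_bubble_single n hε j,
    (((hasFDerivAt_gj n hε x j).const_mul (-(((n:ℝ) - 2) * ε ^ cc n))).fderiv)]
  simp only [ContinuousLinearMap.smul_apply, ContinuousLinearMap.add_apply, Qderiv_apply,
    ContinuousLinearMap.proj_apply, smul_eq_mul, Pi.single_apply]
  rcases eq_or_ne i j with h | h
  · subst h; simp; ring_nf; exact Or.inl trivial
  · simp [h, Ne.symm h]; ring_nf; exact Or.inl trivial
end BubbleAux2

section BubbleAux3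

lemma gradSq_bubble (n : ℕ) {ε : ℝ} (hε : 0 < ε) (x : Fin n → ℝ) :
    gradSq n (bubble n ε) x
      = (((n:ℝ) - 2) * ε ^ cc n) ^ 2 * (S n ε x ^ (-(cc n) - 1)) ^ 2 * Q n x := by
  rw [gradSq]
  calc ∑ i, (egrad n (bubble n ε) x i) ^ 2
      = ∑ i, ((((n:ℝ) - 2) * ε ^ cc n) ^ 2 * (S n ε x ^ (-(cc n) - 1)) ^ 2) * x i ^ 2 :=
        Finset.sum_congr rfl (fun i _ => by rw [egrad_bubble n hε x i]; ring)
    _ = _ := by rw [Q, Finset.mul_sum]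

lemma Vdiv_eq (n : ℕ) (hn : 3 ≤ n) {ε : ℝ} (hε : 0 < ε) (x : Fin n → ℝ) :
    (Matrix.of fun i j => Vmat n (bubble n ε) x i j / bubble n ε x)
      = (((n:ℝ) - 2) * ε ^ 2 / S n ε x ^ 2) • (1 : Matrix (Fin n) (Fin n) ℝ) := by
  have hS : 0 < S n ε x := S_pos hε x
  have hn' : (3:ℝ) ≤ (n:ℝ) := by exact_mod_cast hn
  have hm : ((n:ℝ) - 2) ≠ 0 := by linarith
  have hA : (0:ℝ) < S n ε x ^ (-(cc n)) := Real.rpow_pos_of_pos hS _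
  have hE : (0:ℝ) < ε ^ cc n := Real.rpow_pos_of_pos hε _
  have h1 : S n ε x ^ (-(cc n) - 1) = S n ε x ^ (-(cc n)) / S n ε x := by
    rw [Real.rpow_sub hS, Real.rpow_one]
  have h2 : S n ε x ^ (-(cc n) - 1 - 1) = S n ε x ^ (-(cc n)) / S n ε x / S n ε x := by
    rw [Real.rpow_sub hS, Real.rpow_sub hS, Real.rpow_one]
  have hQ : Q n x = S n ε x - ε ^ 2 := by rw [S]; ring
  have hc : cc n = ((n:ℝ) - 2) / 2 := rfl
  ext i j
  simp only [Matrix.of_apply, Vmat, Matrix.smul_apply, Matrix.one_apply, smul_eq_mul]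
  rw [ehess_bubble n hε, egrad_bubble n hε, egrad_bubble n hε, gradSq_bubble n hε]
  simp only [bubble_eq n hε]
  rw [h1, h2, hQ, hc]
  rcases eq_or_ne i j with h | h
  · subst h
    simp only [if_pos rfl]
    field_simp
    ring
  · simp only [if_neg h]
    field_simp
    ring

end BubbleAux3

section BubbleAux4

lemma sigmaMinors_smul_one (n k : ℕ) (μ : ℝ) :
    sigmaMinors n k (μ • (1 : Matrix (Fin n) (Fin n) ℝ)) = (n.choose k : ℝ) * μ ^ k := by
  rw [sigmaMinors]
  rw [Finset.sum_congr rfl (fun s hs => ?_), Finset.sum_const, Finset.card_powersetCard,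
    Finset.card_univ, Fintype.card_fin, nsmul_eq_mul]
  have hcard : s.card = k := (Finset.mem_powersetCard.mp hs).2
  have h1 : (μ • (1 : Matrix (Fin n) (Fin n) ℝ)).submatrix
      (Subtype.val : {i // i ∈ s} → Fin n) (Subtype.val : {i // i ∈ s} → Fin n)
      = μ • ((1 : Matrix (Fin n) (Fin n) ℝ).submatrix
        (Subtype.val : {i // i ∈ s} → Fin n) (Subtype.val : {i // i ∈ s} → Fin n)) := by
    ext a b; simp [Matrix.submatrix_apply]
  rw [h1, Matrix.submatrix_one _ Subtype.val_injective, Matrix.det_smul,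
    Matrix.det_one, mul_one, Fintype.card_coe, hcard]

end BubbleAux4

section BubbleAux5

lemma bubble_val (n : ℕ) (ε : ℝ) (x : Fin n → ℝ) :
    bubble n ε x = (ε / S n ε x) ^ cc n := rfl

lemma bubble_pow_main (n : ℕ) (hn : 3 ≤ n) {ε : ℝ} (hε : 0 < ε) (x : Fin n → ℝ) :
    bubble n ε x ^ ((2 * (n : ℝ)) / ((n : ℝ) - 2)) = (ε / S n ε x) ^ (n : ℝ) := by
  have hw : (0:ℝ) ≤ ε / S n ε x := le_of_lt (div_pos hε (S_pos hε x))
  have hn' : (3:ℝ) ≤ (n:ℝ) := by exact_mod_cast hn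
  have hm : ((n:ℝ) - 2) ≠ 0 := by linarith
  rw [bubble_val, ← Real.rpow_mul hw]
  congr 1
  rw [cc]
  field_simp

lemma integrand_eq (n : ℕ) (hn : 3 ≤ n) (k : ℕ) {ε : ℝ} (hε : 0 < ε) (x : Fin n → ℝ) :
    bubble n ε x ^ ((2 * (n : ℝ) - 4 * (k : ℝ)) / ((n : ℝ) - 2)) *
        sigmaMinors n k (Matrix.of fun i j => Vmat n (bubble n ε) x i j / bubble n ε x)
      = ((n.choose k : ℝ) * ((n : ℝ) - 2) ^ k) *
          (bubble n ε x ^ ((2 * (n : ℝ)) / ((n : ℝ) - 2))) := by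
  have hS := S_pos hε x
  have hw : (0:ℝ) < ε / S n ε x := div_pos hε hS
  have hn' : (3:ℝ) ≤ (n:ℝ) := by exact_mod_cast hn
  have hm : ((n:ℝ) - 2) ≠ 0 := by linarith
  rw [Vdiv_eq n hn hε x, sigmaMinors_smul_one, bubble_pow_main n hn hε x, bubble_val,
    ← Real.rpow_mul hw.le]
  have e1 : cc n * ((2 * (n : ℝ) - 4 * (k : ℝ)) / ((n : ℝ) - 2)) = (n : ℝ) - 2 * k := by
    rw [cc]; field_simp; ring
  rw [e1]
  have e2 : (((n:ℝ) - 2) * ε ^ 2 / S n ε x ^ 2) ^ k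
      = ((n:ℝ) - 2) ^ k * (ε / S n ε x) ^ ((2 * k : ℕ) : ℝ) := by
    rw [mul_div_assoc, mul_pow, ← div_pow, ← pow_mul, Real.rpow_natCast]
  rw [e2]
  have e3 : (ε / S n ε x) ^ ((n : ℝ) - 2 * k) * (ε / S n ε x) ^ ((2 * k : ℕ) : ℝ)
      = (ε / S n ε x) ^ (n : ℝ) := by
    rw [← Real.rpow_add hw]
    congr 1
    push_cast
    ring
  calc (ε / S n ε x) ^ ((n : ℝ) - 2 * k) *
        ((n.choose k : ℝ) * (((n:ℝ) - 2) ^ k * (ε / S n ε x) ^ ((2 * k : ℕ) : ℝ)))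
      = ((n.choose k : ℝ) * ((n:ℝ) - 2) ^ k) *
        ((ε / S n ε x) ^ ((n : ℝ) - 2 * k) * (ε / S n ε x) ^ ((2 * k : ℕ) : ℝ)) := by ring
    _ = _ := by rw [e3]

end BubbleAux5

section BubbleAux6
open MeasureTheory Module

lemma norm_sq_le_Q (n : ℕ) (x : Fin n → ℝ) : ‖x‖ ^ 2 ≤ Q n x := by
  have h1 : ‖x‖ ≤ Real.sqrt (Q n x) := by
    rw [pi_norm_le_iff_of_nonneg (Real.sqrt_nonneg _)]
    intro i
    rw [Real.norm_eq_abs, ← Real.sqrt_sq_eq_abs]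
    exact Real.sqrt_le_sqrt (Finset.single_le_sum (fun j _ => sq_nonneg (x j)) (Finset.mem_univ i))
  calc ‖x‖ ^ 2 ≤ Real.sqrt (Q n x) ^ 2 := by
        apply pow_le_pow_left₀ (norm_nonneg x) h1
    _ = Q n x := Real.sq_sqrt (Q_nonneg n x)

lemma continuous_S (n : ℕ) (ε : ℝ) : Continuous (S n ε) := by
  apply continuous_const.add
  exact continuous_finset_sum _ (fun i _ => (continuous_apply i).pow 2)

lemma integrable_F (n : ℕ) (hn : 3 ≤ n) {ε : ℝ} (hε : 0 < ε) :
    Integrable (fun x : Fin n → ℝ => (ε / S n ε x) ^ (n : ℝ)) := by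
  set A : ℝ := min (ε ^ 2) 1 with hA
  have hA0 : 0 < A := lt_min (by positivity) one_pos
  have hnr : ((finrank ℝ (Fin n → ℝ) : ℝ)) < 2 * n := by
    rw [Module.finrank_fin_fun]
    have : (1:ℝ) ≤ (n:ℝ) := by exact_mod_cast Nat.one_le_of_lt hn
    linarith
  have hint : Integrable (fun x : Fin n → ℝ => ((1:ℝ) + ‖x‖ ^ 2) ^ (-(2 * (n:ℝ)) / 2)) :=
    integrable_rpow_neg_one_add_norm_sq hnr
  refine (hint.const_mul ((ε / A) ^ (n:ℝ))).mono' ?_ (Filter.Eventually.of_forall fun x => ?_)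
  · apply Continuous.aestronglyMeasurable
    apply Continuous.rpow_const
    · exact continuous_const.div (continuous_S n ε) (fun x => (S_pos hε x).ne')
    · exact fun x => Or.inr (Nat.cast_nonneg n)
  · have hS := S_pos hε x
    have h1 : A * (1 + ‖x‖ ^ 2) ≤ S n ε x := by
      have h2 : A * ‖x‖ ^ 2 ≤ Q n x :=
        le_trans (mul_le_of_le_one_left (sq_nonneg _) (min_le_right _ _)) (norm_sq_le_Q n x)
      have h3 : A ≤ ε ^ 2 := min_le_left _ _
      rw [S]; nlinarith [sq_nonneg ‖x‖]
    have hw : (0:ℝ) < ε / S n ε x := div_pos hε hS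
    rw [Real.norm_eq_abs, abs_of_nonneg (Real.rpow_nonneg hw.le _)]
    have hbd : ε / S n ε x ≤ (ε / A) * (1 + ‖x‖ ^ 2)⁻¹ := by
      have := div_le_div_of_nonneg_left hε.le (by positivity : (0:ℝ) < A * (1 + ‖x‖ ^ 2)) h1
      calc ε / S n ε x ≤ ε / (A * (1 + ‖x‖ ^ 2)) := this
        _ = (ε / A) * (1 + ‖x‖ ^ 2)⁻¹ := by rw [← div_div, div_eq_mul_inv]
    calc (ε / S n ε x) ^ (n:ℝ)
        ≤ ((ε / A) * (1 + ‖x‖ ^ 2)⁻¹) ^ (n:ℝ) :=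
          Real.rpow_le_rpow hw.le hbd (Nat.cast_nonneg n)
      _ = (ε / A) ^ (n:ℝ) * ((1:ℝ) + ‖x‖ ^ 2) ^ (-(2 * (n:ℝ)) / 2) := by
          rw [Real.mul_rpow (by positivity) (by positivity),
            Real.inv_rpow (by positivity), ← Real.rpow_neg (by positivity)]
          congr 1
          ring
end BubbleAux6

section BubbleAux7
open MeasureTheory Module

lemma S_scale (n : ℕ) (ε : ℝ) (x : Fin n → ℝ) :
    S n ε (ε • x) = ε ^ 2 * S n 1 x := by
  simp only [S, Q, Pi.smul_apply, smul_eq_mul, mul_pow, ← Finset.mul_sum]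
  ring

lemma integral_F_eq (n : ℕ) (hn : 3 ≤ n) {ε : ℝ} (hε : 0 < ε) :
    ∫ x : Fin n → ℝ, (ε / S n ε x) ^ (n : ℝ)
      = ∫ x : Fin n → ℝ, ((1:ℝ) / S n 1 x) ^ (n : ℝ) := by
  have h := MeasureTheory.Measure.integral_comp_smul (μ := volume)
    (fun x : Fin n → ℝ => (ε / S n ε x) ^ (n : ℝ)) ε
  have hfr : finrank ℝ (Fin n → ℝ) = n := Module.finrank_fin_fun ℝ
  rw [hfr] at h
  have hpt : ∀ x : Fin n → ℝ,
      (ε / S n ε (ε • x)) ^ (n : ℝ) = ε ^ (-(n:ℝ)) * ((1:ℝ) / S n 1 x) ^ (n : ℝ) := by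
    intro x
    have hS1 : 0 < S n 1 x := S_pos one_pos x
    have h1 : ε / S n ε (ε • x) = ε⁻¹ * ((1:ℝ) / S n 1 x) := by
      rw [S_scale]
      field_simp
    rw [h1, Real.mul_rpow (by positivity) (by positivity), Real.inv_rpow hε.le,
      ← Real.rpow_neg hε.le, Real.rpow_natCast]
  have hL : ∫ x : Fin n → ℝ, (ε / S n ε (ε • x)) ^ (n : ℝ)
      = ε ^ (-(n:ℝ)) * ∫ x : Fin n → ℝ, ((1:ℝ) / S n 1 x) ^ (n : ℝ) := by
    rw [show (fun x : Fin n → ℝ => (ε / S n ε (ε • x)) ^ (n : ℝ))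
        = fun x => ε ^ (-(n:ℝ)) * ((1:ℝ) / S n 1 x) ^ (n : ℝ) from funext hpt]
    exact integral_const_mul _ _
  have hR : |((ε ^ n : ℝ))⁻¹| = ε ^ (-(n:ℝ)) := by
    rw [abs_of_pos (by positivity), ← Real.rpow_natCast ε n, ← Real.rpow_neg hε.le]
  rw [hL, hR, smul_eq_mul] at h
  have hne : ε ^ (-(n:ℝ)) ≠ 0 := (Real.rpow_pos_of_pos hε _).ne'
  exact (mul_left_cancel₀ hne h.symm)

end BubbleAux7

open MeasureTheory in
/-- The bubble integrals: `∫_{ℝⁿ} v_ε^{2n/(n-2)}` is finite and independent of `ε`, and for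
every `1 ≤ k ≤ n`,
`∫_{ℝⁿ} v_ε^{(2n-4k)/(n-2)} σ_k(λ(V[v_ε]/v_ε)) = C_{n,k} ∫_{ℝⁿ} v_ε^{2n/(n-2)}`
with `C_{n,k} = binom(n,k) (n-2)^k`. -/
theorem bubble_integrals (n : ℕ) (hn : 3 ≤ n) :
    (∀ ε : ℝ, 0 < ε →
      Integrable (fun x : Fin n → ℝ => bubble n ε x ^ ((2 * (n : ℝ)) / ((n : ℝ) - 2)))) ∧
    (∀ ε : ℝ, 0 < ε →
      ∫ x : Fin n → ℝ, bubble n ε x ^ ((2 * (n : ℝ)) / ((n : ℝ) - 2))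
        = ∫ x : Fin n → ℝ, bubble n 1 x ^ ((2 * (n : ℝ)) / ((n : ℝ) - 2))) ∧
    ∀ k : ℕ, 1 ≤ k → k ≤ n → ∀ ε : ℝ, 0 < ε →
      ∫ x : Fin n → ℝ, bubble n ε x ^ ((2 * (n : ℝ) - 4 * (k : ℝ)) / ((n : ℝ) - 2)) *
          sigmaMinors n k (Matrix.of fun i j => Vmat n (bubble n ε) x i j / bubble n ε x)
        = (n.choose k : ℝ) * ((n : ℝ) - 2) ^ k
            * ∫ x : Fin n → ℝ, bubble n ε x ^ ((2 * (n : ℝ)) / ((n : ℝ) - 2)) := by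
  have heq : ∀ ε : ℝ, 0 < ε →
      (fun x : Fin n → ℝ => bubble n ε x ^ ((2 * (n : ℝ)) / ((n : ℝ) - 2)))
        = fun x => (ε / S n ε x) ^ (n : ℝ) :=
    fun ε hε => funext fun x => bubble_pow_main n hn hε x
  refine ⟨fun ε hε => ?_, fun ε hε => ?_, fun k _ _ ε hε => ?_⟩
  · rw [heq ε hε]
    exact integrable_F n hn hε
  · rw [heq ε hε, heq 1 one_pos]
    exact integral_F_eq n hn hε
  · rw [show (fun x : Fin n → ℝ => bubble n ε x ^ ((2 * (n : ℝ) - 4 * (k : ℝ)) / ((n : ℝ) - 2)) *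
          sigmaMinors n k (Matrix.of fun i j => Vmat n (bubble n ε) x i j / bubble n ε x))
        = fun x => ((n.choose k : ℝ) * ((n : ℝ) - 2) ^ k) *
            (bubble n ε x ^ ((2 * (n : ℝ)) / ((n : ℝ) - 2))) from
      funext fun x => integrand_eq n hn k hε x]
    rw [integral_const_mul, mul_assoc]
end

section
/- Counterexample to interior C² estimates (ODE reduction): let ψ(x) = x − (9/7)x^{7/3} for x ≥ 0 and f(x) = 1/3 − x^{4/3} + ψ(x)^{4/3}. Then there exists δ ∈ (0,1) such that: (a) the function φ(x) = ∫_0^x ψ(s)^{1/3} ds satisfies the equation (φ''(x) + φ'(x)²)·φ'(x)² = f(x) for all x ∈ (0, δ); (b) f(x) > 0 for x ∈ [0, δ] and the even extension x ↦ f(|x|) is twice continuously differentiable on (−δ, δ); (c) φ''(x) → +∞ as x → 0⁺, so φ'' is unbounded on (0, δ) and the even extension of φ is not C² at 0. -/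
open Set Filter

/-- `ψ(x) = x - (9/7) x^{7/3}`. -/
noncomputable def psiFun (x : ℝ) : ℝ := x - (9 / 7) * x ^ ((7 : ℝ) / 3)

/-- `f(x) = 1/3 - x^{4/3} + ψ(x)^{4/3}`. -/
noncomputable def fFun (x : ℝ) : ℝ := 1 / 3 - x ^ ((4 : ℝ) / 3) + (psiFun x) ^ ((4 : ℝ) / 3)

/-- `φ(x) = ∫_0^x ψ(s)^{1/3} ds`, so that `φ' = ψ^{1/3}`. -/
noncomputable def phiFun (x : ℝ) : ℝ := ∫ s in (0 : ℝ)..x, (psiFun s) ^ ((1 : ℝ) / 3)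


noncomputable def uu (x : ℝ) : ℝ := (x ^ 2) ^ ((2 : ℝ) / 3)
noncomputable def uu1 (x : ℝ) : ℝ := (4 / 3) * x * (x ^ 2) ^ (-(1 : ℝ) / 3)
noncomputable def uu2 (x : ℝ) : ℝ := (4 / 9) * (x ^ 2) ^ (-(1 : ℝ) / 3)
noncomputable def GG (t : ℝ) : ℝ := t * ((1 - (9 / 7) * t) ^ ((4 : ℝ) / 3) - 1)
noncomputable def GG1 (t : ℝ) : ℝ :=
  ((1 - (9 / 7) * t) ^ ((4 : ℝ) / 3) - 1) - (12 / 7) * t * (1 - (9 / 7) * t) ^ ((1 : ℝ) / 3)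
noncomputable def GG2 (t : ℝ) : ℝ :=
  -(24 / 7) * (1 - (9 / 7) * t) ^ ((1 : ℝ) / 3)
    + (36 / 49) * t * (1 - (9 / 7) * t) ^ (-(2 : ℝ) / 3)

lemma uu_eq_abs (x : ℝ) : uu x = |x| ^ ((4 : ℝ) / 3) := by
  rw [uu, ← sq_abs, ← Real.rpow_natCast |x| 2, ← Real.rpow_mul (abs_nonneg x)]
  norm_num

lemma uu_nonneg (x : ℝ) : 0 ≤ uu x := Real.rpow_nonneg (sq_nonneg x) _

lemma uu_le_abs {x : ℝ} (hx : |x| ≤ 1) : uu x ≤ |x| := by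
  rw [uu_eq_abs]
  rcases eq_or_lt_of_le (abs_nonneg x) with h | h
  · rw [← h, Real.zero_rpow (by norm_num)]
  · calc |x| ^ ((4:ℝ)/3) ≤ |x| ^ (1:ℝ) :=
          Real.rpow_le_rpow_of_exponent_ge h hx (by norm_num)
      _ = |x| := Real.rpow_one _

lemma uu1_zero : uu1 0 = 0 := by simp [uu1]
lemma uu2_zero : uu2 0 = 0 := by
  simp [uu2, Real.zero_rpow (by norm_num : (-(1:ℝ)/3) ≠ 0)]

lemma abs_uu1 (x : ℝ) : |uu1 x| = (4/3) * |x| ^ ((1:ℝ)/3) := by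
  rcases eq_or_ne x 0 with rfl | hx
  · simp [uu1, Real.zero_rpow (by norm_num : ((1:ℝ)/3) ≠ 0)]
  · have h2 : (0:ℝ) < x ^ 2 := by positivity
    rw [uu1, abs_mul, abs_mul, abs_of_pos (Real.rpow_pos_of_pos h2 _)]
    rw [← sq_abs, ← Real.rpow_natCast |x| 2, ← Real.rpow_mul (abs_nonneg x)]
    have hax : (0:ℝ) < |x| := abs_pos.mpr hx
    rw [show ((2:ℕ):ℝ) * (-(1:ℝ)/3) = -(2:ℝ)/3 by norm_num,
      abs_of_nonneg (by norm_num : (0:ℝ) ≤ (4:ℝ)/3)]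
    rw [show (4:ℝ)/3 * |x| * |x| ^ (-(2:ℝ)/3) = 4/3 * (|x| ^ (1:ℝ) * |x| ^ (-(2:ℝ)/3)) by
      rw [Real.rpow_one]; ring, ← Real.rpow_add hax]
    norm_num
lemma sq_uu1 (x : ℝ) : (uu1 x) ^ 2 = (16/9) * (x ^ 2) ^ ((1:ℝ)/3) := by
  rcases eq_or_ne x 0 with rfl | hx
  · simp [uu1, Real.zero_rpow (by norm_num : ((1:ℝ)/3) ≠ 0)]
  · have h2 : (0:ℝ) < x ^ 2 := by positivity
    rw [uu1, mul_pow, mul_pow, ← Real.rpow_natCast ((x^2) ^ (-(1:ℝ)/3)) 2,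
      ← Real.rpow_mul h2.le]
    rw [show (-(1:ℝ)/3) * ((2:ℕ):ℝ) = -(2:ℝ)/3 by norm_num]
    have : (x:ℝ)^2 * (x^2) ^ (-(2:ℝ)/3) = (x^2) ^ ((1:ℝ)/3) := by
      nth_rewrite 1 [← Real.rpow_one (x^2)]
      rw [← Real.rpow_add h2]; norm_num
    nlinarith [this]

lemma uu_mul_uu2 (x : ℝ) : uu x * uu2 x = (4/9) * (x ^ 2) ^ ((1:ℝ)/3) := by
  rcases eq_or_ne x 0 with rfl | hx
  · simp [uu, uu2, Real.zero_rpow (by norm_num : ((2:ℝ)/3) ≠ 0),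
      Real.zero_rpow (by norm_num : ((1:ℝ)/3) ≠ 0)]
  · have h2 : (0:ℝ) < x ^ 2 := by positivity
    rw [uu, uu2, show (x^2) ^ ((2:ℝ)/3) * ((4:ℝ)/9 * (x^2) ^ (-(1:ℝ)/3))
        = (4/9) * ((x^2) ^ ((2:ℝ)/3) * (x^2) ^ (-(1:ℝ)/3)) by ring,
      ← Real.rpow_add h2]
    norm_num



lemma hasDerivAt_sq (x : ℝ) : HasDerivAt (fun x : ℝ => x ^ 2) (2 * x) x := by
  simpa using hasDerivAt_pow 2 x

lemma hasDerivAt_uu {x : ℝ} (hx : x ≠ 0) : HasDerivAt uu (uu1 x) x := by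
  have h2 : x ^ 2 ≠ 0 := pow_ne_zero _ hx
  have := (hasDerivAt_sq x).rpow_const (p := (2:ℝ)/3) (Or.inl h2)
  refine this.congr_deriv ?_
  rw [uu1, show (2:ℝ)/3 - 1 = -(1:ℝ)/3 by norm_num]
  ring

lemma hasDerivAt_uu1 {x : ℝ} (hx : x ≠ 0) : HasDerivAt uu1 (uu2 x) x := by
  have h2 : x ^ 2 ≠ 0 := pow_ne_zero _ hx
  have h2p : (0:ℝ) < x ^ 2 := by positivity
  have hcomp := (hasDerivAt_sq x).rpow_const (p := -(1:ℝ)/3) (Or.inl h2)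
  have hlin : HasDerivAt (fun x : ℝ => (4:ℝ)/3 * x) ((4:ℝ)/3) x := by
    simpa using (hasDerivAt_id x).const_mul ((4:ℝ)/3)
  have hprod := hlin.mul hcomp
  have heq : uu1 = fun x : ℝ => ((4:ℝ)/3 * x) * (x ^ 2) ^ (-(1:ℝ)/3) := by
    funext y; rw [uu1]
  rw [heq]
  refine hprod.congr_deriv ?_
  rw [uu2, show -(1:ℝ)/3 - 1 = -(4:ℝ)/3 by norm_num]
  have hx2 : (x:ℝ)^2 * (x^2) ^ (-(4:ℝ)/3) = (x^2) ^ (-(1:ℝ)/3) := by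
    nth_rewrite 1 [← Real.rpow_one (x^2)]
    rw [← Real.rpow_add h2p]; norm_num
  nlinarith [hx2]

lemma hasDerivAt_linpart (t : ℝ) : HasDerivAt (fun t : ℝ => 1 - (9/7) * t) (-(9/7)) t := by
  exact ((hasDerivAt_const t (1:ℝ)).sub ((hasDerivAt_id t).const_mul ((9:ℝ)/7))).congr_deriv (by simp)

lemma hasDerivAt_GG {t : ℝ} (ht : 1 - (9/7) * t ≠ 0) : HasDerivAt GG (GG1 t) t := by
  have hA := ((hasDerivAt_linpart t).rpow_const (p := (4:ℝ)/3) (Or.inl ht)).sub_const 1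
  have hprod := (hasDerivAt_id t).mul hA
  have heq : GG = fun t : ℝ => id t * ((1 - (9/7) * t) ^ ((4:ℝ)/3) - 1) := rfl
  rw [heq]
  refine hprod.congr_deriv ?_
  rw [GG1, show (4:ℝ)/3 - 1 = (1:ℝ)/3 by norm_num]
  simp only [id]
  ring

lemma hasDerivAt_GG1 {t : ℝ} (ht : 1 - (9/7) * t ≠ 0) : HasDerivAt GG1 (GG2 t) t := by
  have hA := ((hasDerivAt_linpart t).rpow_const (p := (4:ℝ)/3) (Or.inl ht)).sub_const 1
  have hB := (hasDerivAt_linpart t).rpow_const (p := (1:ℝ)/3) (Or.inl ht)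
  have hlin : HasDerivAt (fun t : ℝ => (12:ℝ)/7 * t) ((12:ℝ)/7) t := by
    simpa using (hasDerivAt_id t).const_mul ((12:ℝ)/7)
  have hthis := hA.sub (hlin.mul hB)
  have heq : GG1 = fun t : ℝ => ((1 - (9/7) * t) ^ ((4:ℝ)/3) - 1)
      - ((12:ℝ)/7 * t) * (1 - (9/7) * t) ^ ((1:ℝ)/3) := by
    funext s; rw [GG1]
  rw [heq]
  refine hthis.congr_deriv ?_
  rw [GG2, show (4:ℝ)/3 - 1 = (1:ℝ)/3 by norm_num, show (1:ℝ)/3 - 1 = -(2:ℝ)/3 by norm_num]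
  ring



section bounds
variable {t : ℝ}

lemma a_lb (h1 : t ≤ 1/8) : (47:ℝ)/56 ≤ 1 - (9/7) * t := by linarith
lemma a_ub (h0 : 0 ≤ t) : 1 - (9/7) * t ≤ 1 := by linarith
lemma a_pos (h1 : t ≤ 1/8) : (0:ℝ) < 1 - (9/7) * t := lt_of_lt_of_le (by norm_num) (a_lb h1)

lemma A_bounds (h0 : 0 ≤ t) (h1 : t ≤ 1/8) : 1 - (18/7) * t ≤ (1 - (9/7) * t) ^ ((4:ℝ)/3) ∧
    (1 - (9/7) * t) ^ ((4:ℝ)/3) ≤ 1 := by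
  set a := 1 - (9/7) * t with ha
  have hap : 0 < a := a_pos h1
  have hau : a ≤ 1 := a_ub h0
  constructor
  · have h2 : a ^ (2:ℝ) ≤ a ^ ((4:ℝ)/3) :=
      Real.rpow_le_rpow_of_exponent_ge hap hau (by norm_num)
    have h2' : a ^ (2:ℝ) = a ^ 2 := by
      rw [← Real.rpow_natCast a 2]; norm_num
    rw [h2'] at h2
    nlinarith [sq_nonneg t]
  · exact Real.rpow_le_one hap.le hau (by norm_num)

lemma B_bounds (h0 : 0 ≤ t) (h1 : t ≤ 1/8) : (47:ℝ)/56 ≤ (1 - (9/7) * t) ^ ((1:ℝ)/3) ∧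
    (1 - (9/7) * t) ^ ((1:ℝ)/3) ≤ 1 := by
  set a := 1 - (9/7) * t with ha
  have hap : 0 < a := a_pos h1
  have hau : a ≤ 1 := a_ub h0
  constructor
  · calc (47:ℝ)/56 ≤ a := a_lb h1
      _ = a ^ (1:ℝ) := (Real.rpow_one a).symm
      _ ≤ a ^ ((1:ℝ)/3) := Real.rpow_le_rpow_of_exponent_ge hap hau (by norm_num)
  · exact Real.rpow_le_one hap.le hau (by norm_num)

lemma GG_bound (h0 : 0 ≤ t) (h1 : t ≤ 1/8) : |GG t| ≤ 3 * t ^ 2 := by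
  obtain ⟨hl, hu⟩ := A_bounds h0 h1
  rw [GG, abs_mul, abs_of_nonneg h0]
  have : |(1 - (9/7) * t) ^ ((4:ℝ)/3) - 1| ≤ (18/7) * t := by
    rw [abs_le]; constructor <;> nlinarith
  nlinarith [abs_nonneg ((1 - (9/7) * t) ^ ((4:ℝ)/3) - 1)]

lemma GG1_bound (h0 : 0 ≤ t) (h1 : t ≤ 1/8) : |GG1 t| ≤ 5 * t := by
  obtain ⟨hAl, hAu⟩ := A_bounds h0 h1
  obtain ⟨hBl, hBu⟩ := B_bounds h0 h1
  have hBnn : (0:ℝ) ≤ (1 - (9/7) * t) ^ ((1:ℝ)/3) := le_trans (by norm_num) hBl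
  rw [GG1, abs_le]; constructor <;> nlinarith

lemma GG2_bound (h0 : 0 ≤ t) (h1 : t ≤ 1/8) : |GG2 t| ≤ 4 := by
  obtain ⟨hBl, hBu⟩ := B_bounds h0 h1
  set a := 1 - (9/7) * t with ha
  have hap : 0 < a := a_pos h1
  have hau : a ≤ 1 := a_ub h0
  have hC : a ^ (-(2:ℝ)/3) ≤ 56/47 := by
    have h23 : a ≤ a ^ ((2:ℝ)/3) := by
      calc a = a ^ (1:ℝ) := (Real.rpow_one a).symm
        _ ≤ a ^ ((2:ℝ)/3) := Real.rpow_le_rpow_of_exponent_ge hap hau (by norm_num)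
    have hpos : 0 < a ^ ((2:ℝ)/3) := Real.rpow_pos_of_pos hap _
    have : a ^ (-(2:ℝ)/3) = (a ^ ((2:ℝ)/3))⁻¹ := by
      rw [← Real.rpow_neg hap.le]; norm_num
    rw [this]
    have h47 : (47:ℝ)/56 ≤ a ^ ((2:ℝ)/3) := le_trans (a_lb h1) h23
    rw [inv_le_comm₀ hpos (by norm_num)]
    linarith
  have hCnn : (0:ℝ) ≤ a ^ (-(2:ℝ)/3) := (Real.rpow_pos_of_pos hap _).le
  rw [GG2, abs_le]; constructor <;> nlinarith
end bounds

section bridge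

lemma abs_rpow_split {y : ℝ} (hy : 0 ≤ y) : y ^ ((7:ℝ)/3) = y * y ^ ((4:ℝ)/3) := by
  rcases eq_or_lt_of_le hy with h | h
  · rw [← h, Real.zero_rpow (by norm_num : ((7:ℝ)/3) ≠ 0),
      Real.zero_rpow (by norm_num : ((4:ℝ)/3) ≠ 0), mul_zero]
  · rw [show (7:ℝ)/3 = 1 + 4/3 by norm_num, Real.rpow_add h, Real.rpow_one]

lemma psi_abs_eq (x : ℝ) : psiFun |x| = |x| * (1 - (9/7) * uu x) := by
  rw [psiFun, uu_eq_abs, abs_rpow_split (abs_nonneg x)]; ring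

lemma one_sub_uu_nonneg {x : ℝ} (hx : |x| ≤ 1/8) : 0 ≤ 1 - (9/7) * uu x := by
  have h := uu_le_abs (le_trans hx (by norm_num))
  have h0 := uu_nonneg x
  linarith

lemma fFun_abs_eq {x : ℝ} (hx : |x| ≤ 1/8) : fFun |x| = 1/3 + GG (uu x) := by
  rw [fFun, psi_abs_eq x, Real.mul_rpow (abs_nonneg x) (one_sub_uu_nonneg hx),
    ← uu_eq_abs, GG]
  ring

lemma fFun_zero : fFun 0 = 1/3 := by
  have h := fFun_abs_eq (x := 0) (by norm_num)
  simpa [uu, Real.zero_rpow (by norm_num : ((2:ℝ)/3) ≠ 0), GG] using h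

end bridge

section Fderivs

lemma uu_le_eighth {x : ℝ} (hx : |x| ≤ 1/8) : uu x ≤ 1/8 :=
  le_trans (uu_le_abs (le_trans hx (by norm_num))) hx

lemma one_sub_uu_ne {x : ℝ} (hx : |x| ≤ 1/8) : 1 - (9/7) * uu x ≠ 0 :=
  (a_pos (uu_le_eighth hx)).ne'

lemma eventually_fFun_abs {x : ℝ} (hx : |x| < 1/8) :
    (fun y => fFun |y|) =ᶠ[nhds x] fun y => 1/3 + GG (uu y) := by
  have hmem : x ∈ Ioo (-(1/8) : ℝ) (1/8) := abs_lt.mp hx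
  filter_upwards [isOpen_Ioo.eventually_mem hmem] with y hy
  exact fFun_abs_eq (le_of_lt (abs_lt.mpr ⟨hy.1, hy.2⟩))

lemma hasDerivAt_FF {x : ℝ} (hx : |x| < 1/8) :
    HasDerivAt (fun y => fFun |y|) (GG1 (uu x) * uu1 x) x := by
  rcases eq_or_ne x 0 with rfl | hxne
  · have huu0 : uu 0 = 0 := by
      simp [uu, Real.zero_rpow (by norm_num : ((2:ℝ)/3) ≠ 0)]
    rw [uu1_zero, mul_zero]
    rw [hasDerivAt_iff_tendsto_slope]
    apply squeeze_zero_norm' (a := fun y => 3 * |y|)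
    · have hmem : {y : ℝ | |y| < 1/8} ∈ nhdsWithin (0:ℝ) {(0:ℝ)}ᶜ := by
        apply mem_nhdsWithin_of_mem_nhds
        have : Ioo (-(1/8):ℝ) (1/8) ∈ nhds (0:ℝ) := Ioo_mem_nhds (by norm_num) (by norm_num)
        exact Filter.mem_of_superset this (fun y hy => abs_lt.mpr ⟨hy.1, hy.2⟩)
      filter_upwards [hmem] with y hy
      rw [slope_def_field]
      have h0 : fFun |(0:ℝ)| = 1/3 := by rw [abs_zero, fFun_zero]
      have hy' : fFun |y| = 1/3 + GG (uu y) := fFun_abs_eq hy.le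
      rw [h0, hy', sub_zero]
      have hGb := GG_bound (uu_nonneg y) (uu_le_eighth hy.le)
      have huy : uu y ≤ |y| := uu_le_abs (le_trans hy.le (by norm_num))
      have h1 : |1/3 + GG (uu y) - 1/3| = |GG (uu y)| := by ring_nf
      rw [norm_div, Real.norm_eq_abs, Real.norm_eq_abs, h1]
      rcases eq_or_ne y 0 with rfl | hyne
      · simp
      · rw [div_le_iff₀ (abs_pos.mpr hyne)]
        have : (uu y)^2 ≤ |y| * |y| := by nlinarith [uu_nonneg y, abs_nonneg y]
        nlinarith [abs_nonneg y]
    · have : Tendsto (fun y : ℝ => 3 * |y|) (nhds 0) (nhds 0) := by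
        have := (continuous_abs.tendsto (0:ℝ)).const_mul (3:ℝ)
        simpa using this
      exact this.mono_left nhdsWithin_le_nhds
  · have h18 : 1 - (9/7) * uu x ≠ 0 := one_sub_uu_ne hx.le
    have hcomp := (hasDerivAt_GG h18).comp x (hasDerivAt_uu hxne)
    have := hcomp.const_add (1/3 : ℝ)
    exact this.congr_of_eventuallyEq (eventually_fFun_abs hx)

lemma hasDerivAt_FF1 {x : ℝ} (hx : |x| < 1/8) :
    HasDerivAt (fun y => GG1 (uu y) * uu1 y)
      (GG2 (uu x) * (uu1 x) ^ 2 + GG1 (uu x) * uu2 x) x := by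
  rcases eq_or_ne x 0 with rfl | hxne
  · rw [uu1_zero, uu2_zero]
    rw [show GG2 (uu 0) * (0:ℝ)^2 + GG1 (uu 0) * 0 = 0 by ring]
    rw [hasDerivAt_iff_tendsto_slope]
    apply squeeze_zero_norm' (a := fun y => (20/3) * |y| ^ ((1:ℝ)/3))
    · have hmem : {y : ℝ | |y| < 1/8} ∈ nhdsWithin (0:ℝ) {(0:ℝ)}ᶜ := by
        apply mem_nhdsWithin_of_mem_nhds
        have : Ioo (-(1/8):ℝ) (1/8) ∈ nhds (0:ℝ) := Ioo_mem_nhds (by norm_num) (by norm_num)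
        exact Filter.mem_of_superset this (fun y hy => abs_lt.mpr ⟨hy.1, hy.2⟩)
      filter_upwards [hmem, self_mem_nhdsWithin] with y hy hyne
      rw [Set.mem_compl_iff, Set.mem_singleton_iff] at hyne
      rw [slope_def_field, uu1_zero, mul_zero, sub_zero, sub_zero]
      rw [norm_div, Real.norm_eq_abs, Real.norm_eq_abs, abs_mul]
      have hG1b := GG1_bound (uu_nonneg y) (uu_le_eighth hy.le)
      have huy : uu y ≤ |y| := uu_le_abs (le_trans hy.le (by norm_num))
      have hu1 : |uu1 y| = (4/3) * |y| ^ ((1:ℝ)/3) := abs_uu1 y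
      rw [div_le_iff₀ (abs_pos.mpr hyne), hu1]
      have h13 : (0:ℝ) ≤ |y| ^ ((1:ℝ)/3) := Real.rpow_nonneg (abs_nonneg y) _
      have hGnn : (0:ℝ) ≤ |GG1 (uu y)| := abs_nonneg _
      have huynn := uu_nonneg y
      nlinarith [abs_nonneg y]
    · have h1 : Tendsto (fun y : ℝ => (20/3) * |y| ^ ((1:ℝ)/3)) (nhds 0) (nhds 0) := by
        have habs : Tendsto (fun y : ℝ => |y|) (nhds 0) (nhds 0) := by
          simpa using continuous_abs.tendsto (0:ℝ)
        have hr : ContinuousAt (fun t : ℝ => t ^ ((1:ℝ)/3)) 0 :=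
          Real.continuousAt_rpow_const 0 _ (Or.inr (by norm_num))
        have := (hr.tendsto.comp habs).const_mul ((20:ℝ)/3)
        simpa [Real.zero_rpow (by norm_num : ((1:ℝ)/3) ≠ 0)] using this
      exact h1.mono_left nhdsWithin_le_nhds
  · have h18 : 1 - (9/7) * uu x ≠ 0 := one_sub_uu_ne hx.le
    have h1 := ((hasDerivAt_GG1 h18).comp x (hasDerivAt_uu hxne)).mul (hasDerivAt_uu1 hxne)
    refine h1.congr_deriv ?_
    simp only [Function.comp]
    ring
end Fderivs

section partB

lemma continuousAt_rpow_sq {x : ℝ} (hx : x ≠ 0) (p : ℝ) :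
    ContinuousAt (fun y : ℝ => (y ^ 2) ^ p) x := by
  have h2 : x ^ 2 ≠ 0 := pow_ne_zero _ hx
  exact ((continuous_pow 2).continuousAt).rpow_const (Or.inl h2)

lemma continuousAt_lin_rpow {t : ℝ} (ht : 1 - (9/7) * t ≠ 0) (p : ℝ) :
    ContinuousAt (fun s : ℝ => (1 - (9/7) * s) ^ p) t := by
  exact ((continuous_const.sub (continuous_const.mul continuous_id)).continuousAt).rpow_const
    (Or.inl ht)

lemma continuousAt_GG1 {t : ℝ} (ht : 1 - (9/7) * t ≠ 0) : ContinuousAt GG1 t := by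
  have h1 := continuousAt_lin_rpow ht ((4:ℝ)/3)
  have h2 := continuousAt_lin_rpow ht ((1:ℝ)/3)
  exact (h1.sub continuousAt_const).sub
    ((continuousAt_const.mul continuousAt_id).mul h2)

lemma continuousAt_GG2 {t : ℝ} (ht : 1 - (9/7) * t ≠ 0) : ContinuousAt GG2 t := by
  have h1 := continuousAt_lin_rpow ht ((1:ℝ)/3)
  have h2 := continuousAt_lin_rpow ht (-(2:ℝ)/3)
  exact (continuousAt_const.mul h1).add
    ((continuousAt_const.mul continuousAt_id).mul h2)

lemma continuousAt_F2_ne {x : ℝ} (hx : x ≠ 0) (hx8 : |x| < 1/8) :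
    ContinuousAt (fun y => GG2 (uu y) * (uu1 y) ^ 2 + GG1 (uu y) * uu2 y) x := by
  have h18 := one_sub_uu_ne hx8.le
  have huu : ContinuousAt uu x := continuousAt_rpow_sq hx _
  have huu1 : ContinuousAt uu1 x := by
    exact (continuousAt_const.mul continuousAt_id).mul (continuousAt_rpow_sq hx _)
  have huu2 : ContinuousAt uu2 x := continuousAt_const.mul (continuousAt_rpow_sq hx _)
  exact (((continuousAt_GG2 h18).comp huu).mul (huu1.pow 2)).add
    (((continuousAt_GG1 h18).comp huu).mul huu2)

lemma continuousAt_F2_zero :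
    ContinuousAt (fun y => GG2 (uu y) * (uu1 y) ^ 2 + GG1 (uu y) * uu2 y) 0 := by
  have hval : GG2 (uu 0) * (uu1 0) ^ 2 + GG1 (uu 0) * uu2 0 = 0 := by
    rw [uu1_zero, uu2_zero]; ring
  rw [ContinuousAt, hval]
  apply squeeze_zero_norm' (a := fun y => 10 * (y ^ 2) ^ ((1:ℝ)/3))
  · have hmem : Ioo (-(1/8):ℝ) (1/8) ∈ nhds (0:ℝ) := Ioo_mem_nhds (by norm_num) (by norm_num)
    filter_upwards [hmem] with y hy
    have hy8 : |y| ≤ 1/8 := (abs_lt.mpr ⟨hy.1, hy.2⟩).le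
    have hG2 := GG2_bound (uu_nonneg y) (uu_le_eighth hy8)
    have hG1 := GG1_bound (uu_nonneg y) (uu_le_eighth hy8)
    have hsq := sq_uu1 y
    have hmul := uu_mul_uu2 y
    have hu2nn : 0 ≤ uu2 y := by
      rw [uu2]; positivity
    have hw : (0:ℝ) ≤ (y ^ 2) ^ ((1:ℝ)/3) := Real.rpow_nonneg (sq_nonneg y) _
    rw [Real.norm_eq_abs]
    calc |GG2 (uu y) * (uu1 y) ^ 2 + GG1 (uu y) * uu2 y|
        ≤ |GG2 (uu y) * (uu1 y) ^ 2| + |GG1 (uu y) * uu2 y| := abs_add_le _ _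
      _ = |GG2 (uu y)| * (uu1 y) ^ 2 + |GG1 (uu y)| * uu2 y := by
          rw [abs_mul, abs_mul, abs_of_nonneg (sq_nonneg (uu1 y)), abs_of_nonneg hu2nn]
      _ ≤ 4 * (uu1 y) ^ 2 + (5 * uu y) * uu2 y := by
          have := abs_nonneg (GG1 (uu y))
          nlinarith [sq_nonneg (uu1 y), hu2nn, uu_nonneg y]
      _ = 4 * ((16:ℝ)/9 * (y^2) ^ ((1:ℝ)/3)) + 5 * ((4:ℝ)/9 * (y^2) ^ ((1:ℝ)/3)) := by
          rw [hsq, ← hmul]; ring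
      _ ≤ 10 * (y ^ 2) ^ ((1:ℝ)/3) := by nlinarith
  · have hr : ContinuousAt (fun y : ℝ => (y ^ 2) ^ ((1:ℝ)/3)) 0 :=
      ((continuous_pow 2).continuousAt).rpow_const (Or.inr (by norm_num))
    have := hr.tendsto.const_mul (10:ℝ)
    simpa [Real.zero_rpow (by norm_num : ((1:ℝ)/3) ≠ 0)] using this

lemma partB : ContDiffOn ℝ 2 (fun x => fFun |x|) (Ioo (-(1/8):ℝ) (1/8)) := by
  have habs : ∀ x ∈ Ioo (-(1/8):ℝ) (1/8), |x| < 1/8 :=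
    fun x hx => abs_lt.mpr ⟨hx.1, hx.2⟩
  rw [show (2:WithTop ℕ∞) = 1+1 by norm_num,
    contDiffOn_succ_iff_deriv_of_isOpen isOpen_Ioo]
  refine ⟨fun x hx => (hasDerivAt_FF (habs x hx)).differentiableAt.differentiableWithinAt,
    by simp, ?_⟩
  apply ContDiffOn.congr (f := fun x => GG1 (uu x) * uu1 x)
  swap
  · exact fun x hx => (hasDerivAt_FF (habs x hx)).deriv
  rw [show (1:WithTop ℕ∞) = 0+1 by norm_num,
    contDiffOn_succ_iff_deriv_of_isOpen isOpen_Ioo]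
  refine ⟨fun x hx => (hasDerivAt_FF1 (habs x hx)).differentiableAt.differentiableWithinAt,
    by simp, ?_⟩
  rw [contDiffOn_zero]
  apply ContinuousOn.congr
    (f := fun x => GG2 (uu x) * (uu1 x) ^ 2 + GG1 (uu x) * uu2 x)
  swap
  · exact fun x hx => (hasDerivAt_FF1 (habs x hx)).deriv
  intro x hx
  rcases eq_or_ne x 0 with rfl | hxne
  · exact continuousAt_F2_zero.continuousWithinAt
  · exact (continuousAt_F2_ne hxne (habs x hx)).continuousWithinAt
end partB

section partAC

lemma continuous_rpow_exp {p : ℝ} (hp : 0 ≤ p) : Continuous (fun x : ℝ => x ^ p) := by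
  rw [continuous_iff_continuousAt]
  exact fun x => Real.continuousAt_rpow_const x p (Or.inr hp)

lemma continuous_psi : Continuous psiFun :=
  continuous_id.sub (continuous_const.mul (continuous_rpow_exp (by norm_num : (0:ℝ) ≤ 7/3)))

lemma continuous_psipow {p : ℝ} (hp : 0 ≤ p) : Continuous (fun s : ℝ => psiFun s ^ p) := by
  rw [continuous_iff_continuousAt]
  exact fun x => (continuous_psi.continuousAt).rpow_const (Or.inr hp)

lemma deriv_phi (x : ℝ) : deriv phiFun x = psiFun x ^ ((1:ℝ)/3) :=
  Continuous.deriv_integral _ (continuous_psipow (by norm_num)) 0 x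

lemma hasDerivAt_psi (x : ℝ) : HasDerivAt psiFun (1 - 3 * x ^ ((4:ℝ)/3)) x := by
  have h := (Real.hasDerivAt_rpow_const (x := x) (p := (7:ℝ)/3)
    (Or.inr (by norm_num))).const_mul ((9:ℝ)/7)
  have := (hasDerivAt_id x).sub h
  refine this.congr_deriv ?_
  rw [show (7:ℝ)/3 - 1 = (4:ℝ)/3 by norm_num]
  ring

lemma psiFun_zero : psiFun 0 = 0 := by
  rw [psiFun, Real.zero_rpow (by norm_num : ((7:ℝ)/3) ≠ 0)]; ring

lemma psi_pos {x : ℝ} (hx : x ∈ Ioo (0:ℝ) (1/8)) : 0 < psiFun x := by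
  have hax : |x| = x := abs_of_pos hx.1
  have h8 : |x| ≤ 1/8 := by rw [hax]; exact hx.2.le
  have := psi_abs_eq x
  rw [hax] at this
  rw [this]
  exact mul_pos hx.1 (a_pos (uu_le_eighth h8))

lemma deriv2_phi {x : ℝ} (hx : x ∈ Ioo (0:ℝ) (1/8)) :
    deriv (deriv phiFun) x = 1/3 * psiFun x ^ (-(2:ℝ)/3) * (1 - 3 * x ^ ((4:ℝ)/3)) := by
  have hfun : deriv phiFun = fun y => psiFun y ^ ((1:ℝ)/3) := funext deriv_phi
  rw [hfun]
  have hψ := (psi_pos hx).ne'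
  have h := (hasDerivAt_psi x).rpow_const (p := (1:ℝ)/3) (Or.inl hψ)
  rw [h.deriv, show (1:ℝ)/3 - 1 = -(2:ℝ)/3 by norm_num]
  ring

lemma ode_eq {x : ℝ} (hx : x ∈ Ioo (0:ℝ) (1/8)) :
    (deriv (deriv phiFun) x + (deriv phiFun x) ^ 2) * (deriv phiFun x) ^ 2 = fFun x := by
  have ha : 0 < psiFun x := psi_pos hx
  set a := psiFun x with hadef
  rw [deriv2_phi hx, deriv_phi x]
  have h13sq : (a ^ ((1:ℝ)/3)) ^ 2 = a ^ ((2:ℝ)/3) := by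
    rw [← Real.rpow_natCast (a ^ ((1:ℝ)/3)) 2, ← Real.rpow_mul ha.le]; norm_num
  have hneg : a ^ (-(2:ℝ)/3) * a ^ ((2:ℝ)/3) = 1 := by
    rw [← Real.rpow_add ha]; norm_num
  have h44 : a ^ ((2:ℝ)/3) * a ^ ((2:ℝ)/3) = a ^ ((4:ℝ)/3) := by
    rw [← Real.rpow_add ha]; norm_num
  rw [h13sq, fFun, ← hadef]
  calc (1/3 * a ^ (-(2:ℝ)/3) * (1 - 3 * x ^ ((4:ℝ)/3)) + a ^ ((2:ℝ)/3)) * a ^ ((2:ℝ)/3)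
      = 1/3 * (1 - 3 * x ^ ((4:ℝ)/3)) * (a ^ (-(2:ℝ)/3) * a ^ ((2:ℝ)/3))
        + a ^ ((2:ℝ)/3) * a ^ ((2:ℝ)/3) := by ring
    _ = 1/3 - x ^ ((4:ℝ)/3) + a ^ ((4:ℝ)/3) := by rw [hneg, h44]; ring

lemma f_pos {x : ℝ} (hx : x ∈ Icc (0:ℝ) (1/8)) : 0 < fFun x := by
  have hax : |x| = x := abs_of_nonneg hx.1
  have h8 : |x| ≤ 1/8 := by rw [hax]; exact hx.2
  have heq := fFun_abs_eq h8
  rw [hax] at heq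
  rw [heq]
  have hGb := abs_le.mp (GG_bound (uu_nonneg x) (uu_le_eighth h8))
  have h1 := uu_nonneg x
  have h2 := uu_le_eighth h8
  nlinarith [hGb.1]

lemma tendsto_deriv2_atTop :
    Tendsto (deriv (deriv phiFun)) (nhdsWithin 0 (Ioi (0:ℝ))) atTop := by
  have hIoo : Ioo (0:ℝ) (1/8) ∈ nhdsWithin (0:ℝ) (Ioi 0) :=
    Ioo_mem_nhdsGT_of_mem ⟨le_refl 0, by norm_num⟩
  have h23 : Tendsto (fun x => psiFun x ^ ((2:ℝ)/3)) (nhdsWithin 0 (Ioi (0:ℝ)))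
      (nhdsWithin 0 (Ioi (0:ℝ))) := by
    rw [tendsto_nhdsWithin_iff]
    constructor
    · have h := ((continuous_psipow (by norm_num : (0:ℝ) ≤ 2/3)).tendsto 0).mono_left
        (nhdsWithin_le_nhds (s := Ioi (0:ℝ)))
      rwa [psiFun_zero, Real.zero_rpow (by norm_num : ((2:ℝ)/3) ≠ 0)] at h
    · filter_upwards [hIoo] with x hx
      exact Real.rpow_pos_of_pos (psi_pos hx) _
  have h2 : Tendsto (fun x => (psiFun x ^ ((2:ℝ)/3))⁻¹) (nhdsWithin 0 (Ioi (0:ℝ))) atTop :=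
    h23.inv_tendsto_nhdsGT_zero
  have h3 : Tendsto (fun x : ℝ => 1/3 * (1 - 3 * x ^ ((4:ℝ)/3)))
      (nhdsWithin 0 (Ioi (0:ℝ))) (nhds (1/3 : ℝ)) := by
    have hc : Continuous (fun x : ℝ => 1/3 * (1 - 3 * x ^ ((4:ℝ)/3))) :=
      continuous_const.mul (continuous_const.sub
        (continuous_const.mul (continuous_rpow_exp (by norm_num : (0:ℝ) ≤ 4/3))))
    have h := (hc.tendsto 0).mono_left (nhdsWithin_le_nhds (s := Ioi (0:ℝ)))
    have : (1:ℝ)/3 * (1 - 3 * (0:ℝ) ^ ((4:ℝ)/3)) = 1/3 := by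
      rw [Real.zero_rpow (by norm_num : ((4:ℝ)/3) ≠ 0)]; ring
    rwa [this] at h
  have hmul := h2.atTop_mul_pos (by norm_num : (0:ℝ) < 1/3) h3
  apply hmul.congr'
  filter_upwards [hIoo] with x hx
  rw [deriv2_phi hx]
  have : psiFun x ^ (-(2:ℝ)/3) = (psiFun x ^ ((2:ℝ)/3))⁻¹ := by
    rw [show (-(2:ℝ)/3) = -((2:ℝ)/3) by norm_num, Real.rpow_neg (psi_pos hx).le]
  rw [this]
  ring

lemma unbounded_deriv2 : ¬ ∃ C : ℝ, ∀ x ∈ Ioo (0:ℝ) (1/8), |deriv (deriv phiFun) x| ≤ C := by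
  rintro ⟨C, hC⟩
  have h1 : ∀ᶠ x in nhdsWithin 0 (Ioi (0:ℝ)), C + 1 ≤ deriv (deriv phiFun) x :=
    tendsto_deriv2_atTop.eventually_ge_atTop (C + 1)
  have h2 : Ioo (0:ℝ) (1/8) ∈ nhdsWithin (0:ℝ) (Ioi 0) :=
    Ioo_mem_nhdsGT_of_mem ⟨le_refl 0, by norm_num⟩
  obtain ⟨x, hx1, hx2⟩ := (h1.and (Filter.eventually_mem_set.mpr h2)).exists
  have := hC x hx2
  have := le_abs_self (deriv (deriv phiFun) x)
  linarith

lemma not_contDiffAt_phi : ¬ ContDiffAt ℝ 2 (fun x => phiFun |x|) 0 := by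
  intro hcd
  obtain ⟨u, hu, hcd2⟩ := hcd.contDiffOn (le_refl _) (by simp)
  obtain ⟨ε, hε, hball⟩ := Metric.mem_nhds_iff.mp hu
  have hsub : Ioo (-ε) ε ⊆ u := by
    intro y hy
    apply hball
    rw [Real.ball_eq_Ioo]
    simpa using hy
  have hcd3 : ContDiffOn ℝ 2 (fun x => phiFun |x|) (Ioo (-ε) ε) := hcd2.mono hsub
  rw [show (2:WithTop ℕ∞) = 1+1 by norm_num,
    contDiffOn_succ_iff_deriv_of_isOpen isOpen_Ioo] at hcd3
  have hcd4 := hcd3.2.2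
  rw [show (1:WithTop ℕ∞) = 0+1 by norm_num,
    contDiffOn_succ_iff_deriv_of_isOpen isOpen_Ioo] at hcd4
  have hcont : ContinuousOn (deriv (deriv (fun x => phiFun |x|))) (Ioo (-ε) ε) :=
    contDiffOn_zero.mp hcd4.2.2
  have hat : ContinuousAt (deriv (deriv (fun x => phiFun |x|))) 0 :=
    hcont.continuousAt (Ioo_mem_nhds (by linarith) hε)
  have hgp : ∀ y ∈ Ioi (0:ℝ), deriv (fun x => phiFun |x|) y = deriv phiFun y := by
    intro y hy
    apply Filter.EventuallyEq.deriv_eq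
    filter_upwards [Ioi_mem_nhds hy] with z hz
    rw [abs_of_pos hz]
  have hgp2 : ∀ y ∈ Ioi (0:ℝ), deriv (deriv (fun x => phiFun |x|)) y
      = deriv (deriv phiFun) y := by
    intro y hy
    apply Filter.EventuallyEq.deriv_eq
    filter_upwards [Ioi_mem_nhds hy] with z hz using hgp z hz
  have htends : Tendsto (deriv (deriv (fun x => phiFun |x|))) (nhdsWithin 0 (Ioi (0:ℝ)))
      (nhds (deriv (deriv (fun x => phiFun |x|)) 0)) :=
    hat.tendsto.mono_left nhdsWithin_le_nhds
  have hfinal : Tendsto (deriv (deriv phiFun)) (nhdsWithin 0 (Ioi (0:ℝ)))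
      (nhds (deriv (deriv (fun x => phiFun |x|)) 0)) := by
    apply htends.congr'
    filter_upwards [self_mem_nhdsWithin] with y hy using hgp2 y hy
  exact not_tendsto_nhds_of_tendsto_atTop tendsto_deriv2_atTop _ hfinal

end partAC


/-- The ODE reduction of the counterexample to interior `C²` estimates: there is
`δ ∈ (0,1)` such that (a) `(φ'' + φ'²) φ'² = f` on `(0,δ)`; (b) `f > 0` on `[0,δ]`
and the even extension `x ↦ f(|x|)` is `C²` on `(-δ,δ)`; (c) `φ''(x) → +∞` as
`x → 0⁺`, so `φ''` is unbounded on `(0,δ)` and the even extension of `φ` is not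
`C²` at the origin. -/
theorem counterexample_ode_reduction :
    ∃ δ : ℝ, 0 < δ ∧ δ < 1 ∧
      (∀ x ∈ Ioo (0 : ℝ) δ,
        (deriv (deriv phiFun) x + (deriv phiFun x) ^ 2) * (deriv phiFun x) ^ 2 = fFun x) ∧
      (∀ x ∈ Icc (0 : ℝ) δ, 0 < fFun x) ∧
      ContDiffOn ℝ 2 (fun x => fFun |x|) (Ioo (-δ) δ) ∧
      Tendsto (deriv (deriv phiFun)) (nhdsWithin 0 (Ioi (0 : ℝ))) atTop ∧
      (¬ ∃ C : ℝ, ∀ x ∈ Ioo (0 : ℝ) δ, |deriv (deriv phiFun) x| ≤ C) ∧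
      ¬ ContDiffAt ℝ 2 (fun x => phiFun |x|) 0 := by
  refine ⟨1/8, by norm_num, by norm_num, fun x hx => ode_eq hx, fun x hx => f_pos hx,
    partB, tendsto_deriv2_atTop, unbounded_deriv2, not_contDiffAt_phi⟩
end
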